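/- arXiv:1602.00636 — 5 statements merged into one kernel-verified Lean document; each statement's English description precedes it below -/
import Mathlib

section
/- If T is a bounded linear operator on a complex Banach space X that admits a decomposition X = X₁ ⊕ X₂ into closed T-invariant subspaces such that the restriction T|X₁ is semi-Fredholm and T|X₂ is quasi-nilpotent, then there exists ε > 0 such that T - λI is semi-Fredholm for all λ with 0 < |λ| < ε. -/
open Function Set

noncomputable section

namespace PseudoBF

variable {E : Type*} [NormedAddCommGroup E] [NormedSpace ℂ E]

/-- `M` is invariant under `T`. -/
def Inv (T : E →L[ℂ] E) (M : Submodule ℂ E) : Prop := ∀ x ∈ M, T x ∈ M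

/-- Restriction of `T` to a `T`-invariant submodule, as a continuous linear map. -/
def restr (T : E →L[ℂ] E) {M : Submodule ℂ E} (h : Inv T M) : M →L[ℂ] M where
  toLinearMap := (T : E →ₗ[ℂ] E).restrict h
  cont := (T.continuous.comp continuous_subtype_val).subtype_mk _

/-- Upper semi-Fredholm: finite dimensional kernel and closed range. -/
def UpperSemiFredholm (T : E →L[ℂ] E) : Prop :=
  FiniteDimensional ℂ (LinearMap.ker (T : E →ₗ[ℂ] E)) ∧ IsClosed (LinearMap.range (T : E →ₗ[ℂ] E) : Set E)

/-- Lower semi-Fredholm: range of finite codimension. -/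
def LowerSemiFredholm (T : E →L[ℂ] E) : Prop :=
  FiniteDimensional ℂ (E ⧸ LinearMap.range (T : E →ₗ[ℂ] E))

/-- Semi-Fredholm: upper or lower semi-Fredholm. -/
def SemiFredholm (T : E →L[ℂ] E) : Prop :=
  UpperSemiFredholm T ∨ LowerSemiFredholm T

/-- Quasi-nilpotent: spectral radius zero. -/
def QuasiNilpotentOp (T : E →L[ℂ] E) : Prop := spectralRadius ℂ T = 0

/-- Bounded below. -/
def BoundedBelow (T : E →L[ℂ] E) : Prop := ∃ c > 0, ∀ x, c * ‖x‖ ≤ ‖T x‖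

/-- Left invertible: bounded below with complemented closed range. -/
def LeftInvertibleOp (T : E →L[ℂ] E) : Prop :=
  BoundedBelow T ∧ IsClosed (LinearMap.range (T : E →ₗ[ℂ] E) : Set E) ∧
    ∃ P : Submodule ℂ E, IsClosed (P : Set E) ∧ IsCompl (LinearMap.range (T : E →ₗ[ℂ] E)) P

/-- Right invertible: surjective with complemented kernel. -/
def RightInvertibleOp (T : E →L[ℂ] E) : Prop :=
  Surjective T ∧ ∃ P : Submodule ℂ E, IsClosed (P : Set E) ∧ IsCompl (LinearMap.ker (T : E →ₗ[ℂ] E)) P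

/-- `T` decomposes as a direct sum, along closed invariant subspaces, of an operator
satisfying `P` and a quasi-nilpotent operator. -/
def Decomp (T : E →L[ℂ] E) (P : ∀ M : Submodule ℂ E, (M →L[ℂ] M) → Prop) : Prop :=
  ∃ (M N : Submodule ℂ E) (hM : Inv T M) (hN : Inv T N),
    IsClosed (M : Set E) ∧ IsClosed (N : Set E) ∧ IsCompl M N ∧
      P M (restr T hM) ∧ QuasiNilpotentOp (restr T hN)

def PseudoUpperSemiBFredholm (T : E →L[ℂ] E) : Prop :=
  Decomp T fun _ S => UpperSemiFredholm S

def PseudoLowerSemiBFredholm (T : E →L[ℂ] E) : Prop :=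
  Decomp T fun _ S => LowerSemiFredholm S

def PseudoSemiBFredholm (T : E →L[ℂ] E) : Prop :=
  Decomp T fun _ S => SemiFredholm S

def PseudoBFredholm (T : E →L[ℂ] E) : Prop :=
  Decomp T fun _ S => UpperSemiFredholm S ∧ LowerSemiFredholm S

def LeftGenDrazinInvertible (T : E →L[ℂ] E) : Prop :=
  Decomp T fun _ S => LeftInvertibleOp S

def RightGenDrazinInvertible (T : E →L[ℂ] E) : Prop :=
  Decomp T fun _ S => RightInvertibleOp S

def GenDrazinInvertible (T : E →L[ℂ] E) : Prop :=
  Decomp T fun _ S => IsUnit S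

def sigma_pBuF (T : E →L[ℂ] E) : Set ℂ :=
  {l | ¬ PseudoUpperSemiBFredholm (T - l • 1)}

def sigma_pBlF (T : E →L[ℂ] E) : Set ℂ :=
  {l | ¬ PseudoLowerSemiBFredholm (T - l • 1)}

def sigma_pBF (T : E →L[ℂ] E) : Set ℂ :=
  {l | ¬ PseudoBFredholm (T - l • 1)}

def sigma_lgD (T : E →L[ℂ] E) : Set ℂ :=
  {l | ¬ LeftGenDrazinInvertible (T - l • 1)}

def sigma_rgD (T : E →L[ℂ] E) : Set ℂ :=
  {l | ¬ RightGenDrazinInvertible (T - l • 1)}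

def sigma_gD (T : E →L[ℂ] E) : Set ℂ :=
  {l | ¬ GenDrazinInvertible (T - l • 1)}

/-- The approximate point spectrum. -/
def sigma_ap (T : E →L[ℂ] E) : Set ℂ := {l | ¬ BoundedBelow (T - l • 1)}

/-- The surjectivity spectrum. -/
def sigma_su (T : E →L[ℂ] E) : Set ℂ := {l | ¬ Surjective ⇑(T - l • 1)}

/-- `T` has the single valued extension property at `l0`. -/
def HasSVEPAt (T : E →L[ℂ] E) (l0 : ℂ) : Prop :=
  ∀ U : Set ℂ, IsOpen U → l0 ∈ U → ∀ f : ℂ → E, AnalyticOnNhd ℂ f U →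
    (∀ z ∈ U, T (f z) = z • f z) → ∀ z ∈ U, f z = 0

/-- The set where `T` fails to have the SVEP. -/
def S_ (T : E →L[ℂ] E) : Set ℂ := {l | ¬ HasSVEPAt T l}

/-- `l` is an accumulation point of `S`. -/
def IsAccPtOf (l : ℂ) (S : Set ℂ) : Prop :=
  ∀ ε > 0, ∃ μ ∈ S, μ ≠ l ∧ ‖μ - l‖ < ε


section Aux

open Filter Topology

set_option maxHeartbeats 1000000

variable {X Y : Type*} [NormedAddCommGroup X] [NormedSpace ℂ X]
  [NormedAddCommGroup Y] [NormedSpace ℂ Y]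

theorem exists_bound_of_inj_closed [CompleteSpace X] [CompleteSpace Y]
    (f : X →L[ℂ] Y) (hinj : Function.Injective f)
    (hcl : IsClosed (LinearMap.range (f : X →ₗ[ℂ] Y) : Set Y)) :
    ∃ c > (0:ℝ), ∀ x, c * ‖x‖ ≤ ‖f x‖ := by
  haveI : CompleteSpace (LinearMap.range (f : X →ₗ[ℂ] Y)) := hcl.completeSpace_coe
  let g : X →L[ℂ] LinearMap.range (f : X →ₗ[ℂ] Y) :=
    f.codRestrict (LinearMap.range (f : X →ₗ[ℂ] Y)) (fun x => LinearMap.mem_range_self _ x)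
  have hker : LinearMap.ker (g : X →ₗ[ℂ] LinearMap.range (f : X →ₗ[ℂ] Y)) = ⊥ := by
    ext x
    simp only [LinearMap.mem_ker, Submodule.mem_bot]
    constructor
    · intro hx
      have h0 : f x = 0 := congrArg Subtype.val hx
      exact hinj (by simpa using h0)
    · rintro rfl; simp
  have hrange : LinearMap.range (g : X →ₗ[ℂ] LinearMap.range (f : X →ₗ[ℂ] Y)) = ⊤ := by
    rw [LinearMap.range_eq_top]
    rintro ⟨y, hy⟩
    obtain ⟨x, hx⟩ := hy
    exact ⟨x, by apply Subtype.ext; simpa [g] using hx⟩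
  let e := ContinuousLinearEquiv.ofBijective g hker hrange
  refine ⟨(‖(e.symm : LinearMap.range (f : X →ₗ[ℂ] Y) →L[ℂ] X)‖ + 1)⁻¹, by positivity, fun x => ?_⟩
  have h1 : ‖x‖ ≤ (‖(e.symm : LinearMap.range (f : X →ₗ[ℂ] Y) →L[ℂ] X)‖ + 1) * ‖f x‖ := by
    have h0 : e.symm (e x) = x := e.symm_apply_apply x
    have h2 : ‖e x‖ = ‖f x‖ := rfl
    calc ‖x‖ = ‖e.symm (e x)‖ := by rw [h0]
      _ ≤ ‖(e.symm : LinearMap.range (f : X →ₗ[ℂ] Y) →L[ℂ] X)‖ * ‖e x‖ :=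
          (e.symm : LinearMap.range (f : X →ₗ[ℂ] Y) →L[ℂ] X).le_opNorm _
      _ ≤ (‖(e.symm : LinearMap.range (f : X →ₗ[ℂ] Y) →L[ℂ] X)‖ + 1) * ‖f x‖ := by
          rw [h2]; gcongr; linarith
  rw [inv_mul_le_iff₀ (by positivity)]
  linarith

theorem isClosed_range_of_bound [CompleteSpace X] (f : X →L[ℂ] Y) {c : ℝ} (hc : 0 < c)
    (h : ∀ x, c * ‖x‖ ≤ ‖f x‖) : IsClosed (LinearMap.range (f : X →ₗ[ℂ] Y) : Set Y) := by
  have hal : AntilipschitzWith (⟨c, hc.le⟩ : NNReal)⁻¹ f := by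
    apply f.antilipschitz_of_bound
    intro x
    change ‖x‖ ≤ c⁻¹ * ‖f x‖; rw [inv_mul_eq_div, le_div_iff₀ hc, mul_comm]
    exact h x
  have h2 := hal.isClosed_range f.uniformContinuous
  rwa [LinearMap.coe_range]

theorem isClosed_sup_findim (C F : Submodule ℂ X) (hC : IsClosed (C : Set X))
    [FiniteDimensional ℂ F] : IsClosed ((C ⊔ F : Submodule ℂ X) : Set X) := by
  haveI := hC
  have h1 : IsClosed ((Submodule.map C.mkQ F : Submodule ℂ (X ⧸ C)) : Set (X ⧸ C)) :=
    Submodule.closed_of_finiteDimensional _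
  have h2 : C ⊔ F = Submodule.comap C.mkQ (Submodule.map C.mkQ F) :=
    (Submodule.comap_map_mkQ C F).symm
  rw [h2]
  have hcont : Continuous (⇑C.mkQ : X → X ⧸ C) :=
    (AddSubgroup.normedMk C.toAddSubgroup).continuous
  exact h1.preimage hcont

theorem surjective_of_close [CompleteSpace X] [CompleteSpace Y]
    (f : X →L[ℂ] Y) (hf : Surjective f) :
    ∃ δ > (0:ℝ), ∀ g : X →L[ℂ] Y, ‖g - f‖ < δ → Surjective g := by
  obtain ⟨C, hC0, hC⟩ := f.exists_preimage_norm_le hf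
  refine ⟨(2*C)⁻¹, by positivity, fun g hg y => ?_⟩
  choose s hs1 hs2 using hC
  set r : Y → Y := fun y' => y' - g (s y') with hr
  have hrle : ∀ y', ‖r y'‖ ≤ (1/2) * ‖y'‖ := by
    intro y'
    have h0 : r y' = (f - g) (s y') := by
      simp [hr, hs1 y']
    rw [h0]
    calc ‖(f - g) (s y')‖ ≤ ‖f - g‖ * ‖s y'‖ := (f - g).le_opNorm _
      _ ≤ (2*C)⁻¹ * (C * ‖y'‖) := by
          have h1 : ‖f - g‖ ≤ (2*C)⁻¹ := by rw [norm_sub_rev]; exact hg.le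
          have h2 : (0:ℝ) ≤ ‖f - g‖ := norm_nonneg _
          exact mul_le_mul h1 (hs2 y') (norm_nonneg _) (by positivity)
      _ = (1/2) * ‖y'‖ := by field_simp
  set q : ℕ → Y := fun n => r^[n] y with hq
  have hqle : ∀ n, ‖q n‖ ≤ (1/2)^n * ‖y‖ := by
    intro n
    induction n with
    | zero => simp [hq]
    | succ n ih =>
        have : q (n+1) = r (q n) := by simp [hq, Function.iterate_succ_apply']
        rw [this]
        calc ‖r (q n)‖ ≤ (1/2) * ‖q n‖ := hrle _
          _ ≤ (1/2) * ((1/2)^n * ‖y‖) := by linarith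
          _ = (1/2)^(n+1) * ‖y‖ := by ring
  have hsum : Summable fun n => s (q n) := by
    apply Summable.of_norm_bounded (g := fun n => (C * ‖y‖) * (1/2)^n)
    · exact (summable_geometric_of_lt_one (by norm_num) (by norm_num)).mul_left _
    · intro n
      calc ‖s (q n)‖ ≤ C * ‖q n‖ := hs2 _
        _ ≤ C * ((1/2)^n * ‖y‖) := by
            have := hqle n
            have : (0:ℝ) ≤ C := hC0.le
            nlinarith [hqle n, hC0.le]
        _ = (C * ‖y‖) * (1/2)^n := by ring
  refine ⟨∑' n, s (q n), ?_⟩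
  have hgx : HasSum (fun n => g (s (q n))) (g (∑' n, s (q n))) := hsum.hasSum.mapL g
  have hkey : ∀ n, g (s (q n)) = q n - q (n+1) := by
    intro n
    have h1 : q (n+1) = q n - g (s (q n)) := by
      simp [hq, Function.iterate_succ_apply']; rfl
    rw [h1]; abel
  have hq0 : Tendsto q atTop (𝓝 0) := by
    apply squeeze_zero_norm hqle
    have : Tendsto (fun n : ℕ => (1/2:ℝ)^n) atTop (𝓝 0) :=
      tendsto_pow_atTop_nhds_zero_of_lt_one (by norm_num) (by norm_num)
    simpa using this.mul_const ‖y‖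
  have htel : Tendsto (fun n => ∑ i ∈ Finset.range n, g (s (q i))) atTop (𝓝 y) := by
    have heq : ∀ n, ∑ i ∈ Finset.range n, g (s (q i)) = y - q n := by
      intro n
      calc ∑ i ∈ Finset.range n, g (s (q i)) = ∑ i ∈ Finset.range n, (q i - q (i+1)) := by
            exact Finset.sum_congr rfl fun i _ => hkey i
        _ = q 0 - q n := Finset.sum_range_sub' q n
        _ = y - q n := by simp [hq]
    simp only [heq]
    simpa using tendsto_const_nhds.sub hq0
  exact tendsto_nhds_unique hgx.tendsto_sum_nat htel


theorem upper_stability [CompleteSpace X] (A : X →L[ℂ] X) (h : UpperSemiFredholm A) :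
    ∃ ε > (0:ℝ), ∀ l : ℂ, ‖l‖ < ε → UpperSemiFredholm (A - l • 1) := by
  obtain ⟨hker, hran⟩ := h
  set K := LinearMap.ker (A : X →ₗ[ℂ] X) with hK
  have hcc : K.ClosedComplemented := Submodule.ClosedComplemented.of_finiteDimensional _
  obtain ⟨M₀, hM₀closed, hcompl⟩ := hcc.exists_isClosed_isCompl
  haveI : CompleteSpace M₀ := hM₀closed.completeSpace_coe
  set A₀ : M₀ →L[ℂ] X := A.comp M₀.subtypeL with hA₀
  have hA₀inj : Function.Injective A₀ := by
    intro a b hab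
    have h1 : A ((a:X) - b) = 0 := by
      simp only [map_sub]
      simpa [hA₀, sub_eq_zero] using hab
    have h2 : ((a:X) - b) ∈ K ⊓ M₀ := ⟨h1, M₀.sub_mem a.2 b.2⟩
    rw [hcompl.inf_eq_bot] at h2
    exact Subtype.ext (sub_eq_zero.mp h2)
  have hrangeeq : LinearMap.range (A₀ : M₀ →ₗ[ℂ] X) = LinearMap.range (A : X →ₗ[ℂ] X) := by
    apply le_antisymm
    · rintro _ ⟨x, rfl⟩; exact ⟨x, rfl⟩
    · rintro _ ⟨x, rfl⟩
      obtain ⟨k, hk, m, hm, hx⟩ := Submodule.mem_sup.mp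
        (by rw [hcompl.sup_eq_top]; trivial : x ∈ K ⊔ M₀)
      refine ⟨⟨m, hm⟩, ?_⟩
      have : A k = 0 := hk
      simp only [hA₀, ContinuousLinearMap.coe_coe, ContinuousLinearMap.coe_comp', Function.comp_apply,
        Submodule.coe_subtypeL', Submodule.coe_subtype]
      rw [← hx, map_add, this, zero_add]
  have hA₀cl : IsClosed (LinearMap.range (A₀ : M₀ →ₗ[ℂ] X) : Set X) := by rw [hrangeeq]; exact hran
  obtain ⟨c, hc0, hc⟩ := exists_bound_of_inj_closed A₀ hA₀inj hA₀cl
  refine ⟨c/2, by positivity, fun l hl => ?_⟩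
  set B := A - l • (1 : X →L[ℂ] X) with hB
  have hBbound : ∀ x : M₀, (c/2) * ‖x‖ ≤ ‖B (x:X)‖ := by
    intro x
    have h1 : B (x:X) = A₀ x - l • (x:X) := by
      simp [hB, hA₀]
    rw [h1]
    have h2 := hc x
    have h3 : ‖A₀ x - l • (x:X)‖ ≥ ‖A₀ x‖ - ‖l • (x:X)‖ := norm_sub_norm_le _ _
    have h4 : ‖l • (x:X)‖ = ‖l‖ * ‖x‖ := by rw [norm_smul]; rfl
    have h5 : ‖(x:X)‖ = ‖x‖ := rfl
    nlinarith [norm_nonneg x, hl.le]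
  constructor
  · set π := K.linearProjOfIsCompl M₀ hcompl with hπ
    have hinj : Function.Injective (π.comp (LinearMap.ker (B : X →ₗ[ℂ] X)).subtype) := by
      intro a b hab
      have h1 : π ((a:X) - b) = 0 := by
        rw [map_sub]; simpa [sub_eq_zero] using hab
      have h2 : ((a:X) - b) ∈ M₀ := by
        rw [← Submodule.linearProjOfIsCompl_ker (p := K) (q := M₀) hcompl]
        exact LinearMap.mem_ker.mpr h1
      have h3 : B ((a:X) - b) = 0 := by
        rw [map_sub]
        have ha : B (a:X) = 0 := LinearMap.mem_ker.mp a.2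
        have hb : B (b:X) = 0 := LinearMap.mem_ker.mp b.2
        rw [ha, hb, sub_zero]
      have h4 := hBbound ⟨_, h2⟩
      rw [h3] at h4
      simp only [norm_zero] at h4
      have h5 : ‖(⟨(a:X) - b, h2⟩ : M₀)‖ = 0 := by nlinarith [norm_nonneg (⟨(a:X) - b, h2⟩ : M₀)]
      have h6 : (a:X) - b = 0 := by
        have := norm_eq_zero.mp h5
        exact congrArg Subtype.val this
      exact Subtype.ext (sub_eq_zero.mp h6)
    exact FiniteDimensional.of_injective _ hinj
  · have hsup : LinearMap.range (B : X →ₗ[ℂ] X) = Submodule.map (B : X →ₗ[ℂ] X) M₀ ⊔ Submodule.map (B : X →ₗ[ℂ] X) K := by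
      conv_lhs => rw [LinearMap.range_eq_map, ← hcompl.sup_eq_top, Submodule.map_sup]
      rw [sup_comm]
    have h1 : Submodule.map (B : X →ₗ[ℂ] X) M₀ = LinearMap.range ((B.comp M₀.subtypeL) : M₀ →ₗ[ℂ] X) := by
      ext x
      simp [Submodule.mem_map, LinearMap.mem_range]
    have h2 : IsClosed ((Submodule.map (B : X →ₗ[ℂ] X) M₀ : Submodule ℂ X) : Set X) := by
      rw [h1]
      exact isClosed_range_of_bound _ (by positivity : (0:ℝ) < c/2) (fun x => hBbound x)
    haveI : FiniteDimensional ℂ (Submodule.map (B : X →ₗ[ℂ] X) K) := by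
      haveI : FiniteDimensional ℂ K := hker
      exact Module.Finite.map K (B : X →ₗ[ℂ] X)
    rw [hsup]
    exact isClosed_sup_findim _ _ h2

theorem lower_stability [CompleteSpace X] (A : X →L[ℂ] X) (h : LowerSemiFredholm A) :
    ∃ ε > (0:ℝ), ∀ l : ℂ, ‖l‖ < ε → LowerSemiFredholm (A - l • 1) := by
  obtain ⟨F, hcompl⟩ := Submodule.exists_isCompl (LinearMap.range (A : X →ₗ[ℂ] X))
  haveI : FiniteDimensional ℂ F := by
    have e := Submodule.quotientEquivOfIsCompl _ F hcompl
    haveI : FiniteDimensional ℂ (X ⧸ LinearMap.range (A : X →ₗ[ℂ] X)) := h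
    exact Module.Finite.equiv e
  haveI : CompleteSpace F := (Submodule.closed_of_finiteDimensional F).completeSpace_coe
  set Φ : ℂ → ((X × F) →L[ℂ] X) := fun l =>
    ((A - l • 1).comp (ContinuousLinearMap.fst ℂ X F)) +
      F.subtypeL.comp (ContinuousLinearMap.snd ℂ X F) with hΦ
  have hΦ0 : Surjective (Φ 0) := by
    intro y
    obtain ⟨a, ⟨x, hx⟩, f, hf, hy⟩ := Submodule.mem_sup.mp
      (by rw [hcompl.sup_eq_top]; trivial : y ∈ LinearMap.range (A : X →ₗ[ℂ] X) ⊔ F)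
    refine ⟨(x, ⟨f, hf⟩), ?_⟩
    simp only [ContinuousLinearMap.coe_coe] at hx; simp [hΦ, hx, hy]
  obtain ⟨δ, hδ0, hδ⟩ := surjective_of_close (Φ 0) hΦ0
  refine ⟨δ, hδ0, fun l hl => ?_⟩
  have hclose : ‖Φ l - Φ 0‖ < δ := by
    have hle : ‖Φ l - Φ 0‖ ≤ ‖l‖ := by
      apply ContinuousLinearMap.opNorm_le_bound _ (norm_nonneg l)
      rintro ⟨x, f⟩
      have h1 : (Φ l - Φ 0) (x, f) = -(l • x) := by
        simp [hΦ]
      rw [h1, norm_neg, norm_smul]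
      gcongr
      exact norm_fst_le (x, f)
    exact lt_of_le_of_lt hle hl
  have hsurj := hδ _ hclose
  set B := A - l • (1 : X →L[ℂ] X) with hB
  set R := LinearMap.range (B : X →ₗ[ℂ] X) with hR
  set g : F →ₗ[ℂ] (X ⧸ R) := R.mkQ.comp F.subtype with hg
  have hgsurj : Surjective g := by
    intro q
    obtain ⟨x, rfl⟩ := R.mkQ_surjective q
    obtain ⟨⟨x', f⟩, hxf⟩ := hsurj x
    have h1 : B x' + (f : X) = x := by simpa [hΦ, hB] using hxf
    refine ⟨f, ?_⟩
    simp only [hg, LinearMap.comp_apply, Submodule.coe_subtype]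
    rw [← h1]
    rw [map_add]
    have h2 : R.mkQ (B x') = 0 := by
      rw [Submodule.mkQ_apply, Submodule.Quotient.mk_eq_zero]
      exact ⟨x', rfl⟩
    rw [h2, zero_add]
  exact Module.Finite.of_surjective g hgsurj

end Aux

/-- The Banach-space adjoint of `T`, acting on the dual space. -/
def adj (T : E →L[ℂ] E) : StrongDual ℂ E →L[ℂ] StrongDual ℂ E :=
  (ContinuousLinearMap.compL ℂ E E ℂ).flip T


set_option maxHeartbeats 2000000 in
theorem stmt0 [CompleteSpace E] (T : E →L[ℂ] E) (hT : PseudoSemiBFredholm T) :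
    ∃ ε > (0 : ℝ), ∀ l : ℂ, 0 < ‖l‖ → ‖l‖ < ε → SemiFredholm (T - l • 1) := by
  classical
  obtain ⟨M, N, hM, hN, hMc, hNc, hMN, hSF, hQnil⟩ := hT
  haveI : CompleteSpace M := hMc.completeSpace_coe
  haveI : CompleteSpace N := hNc.completeSpace_coe
  set A := restr T hM with hA
  set Q := restr T hN with hQdef
  have hAcoe : ∀ (l : ℂ) (m : M),
      (((A - l • (1 : M →L[ℂ] M)) m : M) : E) = (T - l • (1 : E →L[ℂ] E)) (m : E) := by
    intro l m
    have h0 : ((A m : M) : E) = T (m : E) := rfl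
    simp only [ContinuousLinearMap.sub_apply, ContinuousLinearMap.smul_apply,
      ContinuousLinearMap.one_apply, AddSubgroupClass.coe_sub, SetLike.val_smul, h0]
  have hQcoe : ∀ (l : ℂ) (n : N),
      (((Q - l • (1 : N →L[ℂ] N)) n : N) : E) = (T - l • (1 : E →L[ℂ] E)) (n : E) := by
    intro l n
    have h0 : ((Q n : N) : E) = T (n : E) := rfl
    simp only [ContinuousLinearMap.sub_apply, ContinuousLinearMap.smul_apply,
      ContinuousLinearMap.one_apply, AddSubgroupClass.coe_sub, SetLike.val_smul, h0]
  have hQbij : ∀ l : ℂ, l ≠ 0 → Function.Bijective (Q - l • (1 : N →L[ℂ] N)) := by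
    intro l hl
    have hQ0 : spectralRadius ℂ Q = 0 := hQnil
    have h2 : l ∉ spectrum ℂ Q := by
      intro hmem
      have h1 : (‖l‖₊ : ENNReal) ≤ spectralRadius ℂ Q :=
        le_iSup₂ (f := fun k (_ : k ∈ spectrum ℂ Q) => (‖k‖₊ : ENNReal)) l hmem
      rw [hQ0, nonpos_iff_eq_zero] at h1
      simp only [ENNReal.coe_eq_zero, nnnorm_eq_zero] at h1
      exact hl h1
    rw [spectrum.notMem_iff] at h2
    have h3 : IsUnit (Q - l • (1 : N →L[ℂ] N)) := by
      have heq : Q - l • (1 : N →L[ℂ] N) = -(algebraMap ℂ (N →L[ℂ] N) l - Q) := by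
        rw [Algebra.algebraMap_eq_smul_one, neg_sub]
      rw [heq]
      exact h2.neg
    obtain ⟨u, hu⟩ := h3
    constructor
    · intro a b hab
      have h4 : ((↑u⁻¹ : N →L[ℂ] N) * ↑u) = 1 := u.inv_mul
      calc a = (((↑u⁻¹ : N →L[ℂ] N) * ↑u)) a := by rw [h4]; rfl
        _ = (↑u⁻¹ : N →L[ℂ] N) ((Q - l • 1) a) := by
            rw [ContinuousLinearMap.mul_apply, hu]
        _ = (↑u⁻¹ : N →L[ℂ] N) ((Q - l • 1) b) := by rw [hab]
        _ = b := by rw [← hu, ← ContinuousLinearMap.mul_apply, h4]; rfl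
    · intro y
      refine ⟨(↑u⁻¹ : N →L[ℂ] N) y, ?_⟩
      calc (Q - l • 1) ((↑u⁻¹ : N →L[ℂ] N) y)
          = ((↑u : N →L[ℂ] N) * ↑u⁻¹) y := by rw [ContinuousLinearMap.mul_apply, hu]
        _ = y := by rw [u.mul_inv]; rfl
  have hdisj : ∀ u v : E, u ∈ M → v ∈ N → u + v = 0 → u = 0 ∧ v = 0 := by
    intro u v hu hv huv
    have h1 : u = -v := eq_neg_of_add_eq_zero_left huv
    have h2 : u ∈ M ⊓ N := ⟨hu, by rw [h1]; exact N.neg_mem hv⟩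
    rw [hMN.inf_eq_bot] at h2
    have h3 : u = 0 := h2
    refine ⟨h3, ?_⟩
    have := huv
    rw [h3, zero_add] at this
    exact this
  rcases hSF with hup | hlow
  · -- upper semi-Fredholm case
    obtain ⟨ε, hε0, hst⟩ := upper_stability A hup
    refine ⟨ε, hε0, fun l hl0 hlε => ?_⟩
    have hl : l ≠ 0 := by
      intro h; rw [h] at hl0; simp at hl0
    obtain ⟨hkfin, hrcl⟩ := hst l hlε
    obtain ⟨Qinj, Qsurj⟩ := hQbij l hl
    set B := T - l • (1 : E →L[ℂ] E) with hBdef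
    set Al := A - l • (1 : M →L[ℂ] M) with hAldef
    set Ql := Q - l • (1 : N →L[ℂ] N) with hQldef
    left
    constructor
    · -- finite-dimensional kernel
      have hkereq : LinearMap.ker (B : E →ₗ[ℂ] E) = Submodule.map M.subtype (LinearMap.ker (Al : M →ₗ[ℂ] M)) := by
        ext x
        simp only [LinearMap.mem_ker, Submodule.mem_map, Submodule.coe_subtype]
        constructor
        · intro hx
          obtain ⟨k, hk, n, hn, hkn⟩ := Submodule.mem_sup.mp
            (by rw [hMN.sup_eq_top]; trivial : x ∈ M ⊔ N)
          have h1 : ((Al ⟨k, hk⟩ : M) : E) + ((Ql ⟨n, hn⟩ : N) : E) = 0 := by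
            rw [hAcoe, hQcoe]
            have : (⟨k, hk⟩ : M) = (k : E) := rfl
            rw [← map_add]
            show B (k + n) = 0
            rw [hkn]
            exact hx
          obtain ⟨h2, h3⟩ := hdisj _ _ (Al ⟨k, hk⟩).2 (Ql ⟨n, hn⟩).2 h1
          have h4 : (⟨n, hn⟩ : N) = 0 := by
            apply Qinj
            rw [map_zero]
            exact Subtype.ext h3
          have h5 : n = 0 := congrArg Subtype.val h4
          refine ⟨⟨k, hk⟩, ?_, ?_⟩
          · exact LinearMap.mem_ker.mpr (Subtype.ext h2)
          · rw [← hkn, h5, add_zero]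
        · rintro ⟨m, hm, rfl⟩
          have h1 : ((Al m : M) : E) = B (m : E) := hAcoe l m
          have h2 : Al m = 0 := LinearMap.mem_ker.mp hm
          rw [ContinuousLinearMap.coe_coe, ← h1, h2]
          rfl
      rw [hkereq]
      haveI : FiniteDimensional ℂ (LinearMap.ker (Al : M →ₗ[ℂ] M)) := hkfin
      exact Module.Finite.map (LinearMap.ker (Al : M →ₗ[ℂ] M)) M.subtype
    · -- closed range
      set P := M.linearProjOfClosedCompl N hMN hMc hNc with hPdef
      have hPcoe : ⇑P = ⇑(M.linearProjOfIsCompl N hMN) :=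
        Submodule.coe_continuous_linearProjOfClosedCompl' hMN hMc hNc
      have hPleft : ∀ m : M, P (m : E) = m := by
        intro m; rw [hPcoe]; exact Submodule.linearProjOfIsCompl_apply_left hMN m
      have hPright : ∀ x ∈ N, P x = 0 := by
        intro x hx; rw [hPcoe]; exact Submodule.linearProjOfIsCompl_apply_right' hMN hx
      have hPker : ∀ x : E, P x = 0 → x ∈ N := by
        intro x hx
        have h0 : x ∈ LinearMap.ker (M.linearProjOfIsCompl N hMN) := by
          apply LinearMap.mem_ker.mpr
          rw [← hx, hPcoe]
        exact (Submodule.projectionOnto_apply_eq_zero_iff hMN).mp h0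
      have hrange : LinearMap.range (B : E →ₗ[ℂ] E) =
          Submodule.comap (P : E →ₗ[ℂ] M) (LinearMap.range (Al : M →ₗ[ℂ] M)) := by
        ext x
        simp only [LinearMap.mem_range, Submodule.mem_comap, ContinuousLinearMap.coe_coe]
        constructor
        · rintro ⟨y, rfl⟩
          obtain ⟨k, hk, n, hn, hkn⟩ := Submodule.mem_sup.mp
            (by rw [hMN.sup_eq_top]; trivial : y ∈ M ⊔ N)
          have h1 : B y = ((Al ⟨k, hk⟩ : M) : E) + ((Ql ⟨n, hn⟩ : N) : E) := by
            rw [hAcoe, hQcoe, ← map_add]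
            show B y = B (k + n)
            rw [hkn]
          refine ⟨⟨k, hk⟩, ?_⟩
          rw [h1, map_add, hPleft (Al ⟨k, hk⟩), hPright _ (Ql ⟨n, hn⟩).2, add_zero]
        · rintro ⟨m, hm⟩
          have hxn : x - ((P x : M) : E) ∈ N := by
            apply hPker
            rw [map_sub, hPleft (P x), sub_self]
          obtain ⟨n, hn⟩ := Qsurj ⟨x - P x, hxn⟩
          refine ⟨(m : E) + (n : E), ?_⟩
          rw [map_add]
          have h1 : B (m : E) = ((Al m : M) : E) := (hAcoe l m).symm
          have h2 : B (n : E) = ((Ql n : N) : E) := (hQcoe l n).symm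
          rw [h1, h2, hm, hn]
          simp
      have hset : (LinearMap.range (B : E →ₗ[ℂ] E) : Set E) = ⇑P ⁻¹' ((LinearMap.range (Al : M →ₗ[ℂ] M) : Set M)) := by
        rw [hrange]; rfl
      rw [hset]
      exact hrcl.preimage P.continuous
  · -- lower semi-Fredholm case
    obtain ⟨ε, hε0, hst⟩ := lower_stability A hlow
    refine ⟨ε, hε0, fun l hl0 hlε => ?_⟩
    have hl : l ≠ 0 := by
      intro h; rw [h] at hl0; simp at hl0
    haveI hfin : FiniteDimensional ℂ (M ⧸ LinearMap.range ((A - l • (1 : M →L[ℂ] M)) : M →ₗ[ℂ] M)) :=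
      hst l hlε
    obtain ⟨Qinj, Qsurj⟩ := hQbij l hl
    set B := T - l • (1 : E →L[ℂ] E) with hBdef
    set Al := A - l • (1 : M →L[ℂ] M) with hAldef
    set Ql := Q - l • (1 : N →L[ℂ] N) with hQldef
    right
    show FiniteDimensional ℂ (E ⧸ LinearMap.range (B : E →ₗ[ℂ] E))
    set R := LinearMap.range (B : E →ₗ[ℂ] E) with hRdef
    set g : M →ₗ[ℂ] (E ⧸ R) := R.mkQ.comp M.subtype with hg
    have hker : LinearMap.range (Al : M →ₗ[ℂ] M) ≤ LinearMap.ker g := by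
      rintro _ ⟨m, rfl⟩
      apply LinearMap.mem_ker.mpr
      simp only [hg, LinearMap.comp_apply, Submodule.coe_subtype]
      rw [Submodule.mkQ_apply, Submodule.Quotient.mk_eq_zero]
      exact ⟨(m : E), (hAcoe l m).symm⟩
    set gbar := (LinearMap.range (Al : M →ₗ[ℂ] M)).liftQ g hker with hgbar
    have hgsurj : Surjective gbar := by
      intro q
      obtain ⟨x, rfl⟩ := R.mkQ_surjective q
      obtain ⟨k, hk, n, hn, hkn⟩ := Submodule.mem_sup.mp
        (by rw [hMN.sup_eq_top]; trivial : x ∈ M ⊔ N)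
      obtain ⟨n', hn'⟩ := Qsurj ⟨n, hn⟩
      have hnR : n ∈ R := by
        refine ⟨(n' : E), ?_⟩
        rw [ContinuousLinearMap.coe_coe, (hQcoe l n').symm, hn']
      refine ⟨Submodule.Quotient.mk (⟨k, hk⟩ : M), ?_⟩
      rw [hgbar, Submodule.liftQ_apply]
      simp only [hg, LinearMap.comp_apply, Submodule.coe_subtype]
      rw [Submodule.mkQ_apply, Submodule.mkQ_apply, Submodule.Quotient.eq]
      show (k : E) - x ∈ R
      rw [← hkn]
      have : k - (k + n) = -n := by abel
      rw [this]
      exact R.neg_mem hnR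
    exact Module.Finite.of_surjective gbar hgsurj


end PseudoBF
end
end

section
/- For every bounded linear operator T on a complex Banach space, the pseudo upper semi B-Fredholm spectrum σ_{pBuF}(T) = {λ ∈ ℂ : T - λI is not pseudo upper semi B-Fredholm} is a compact subset of ℂ. -/
open Function Set

noncomputable section

namespace PseudoBF

variable {E : Type*} [NormedAddCommGroup E] [NormedSpace ℂ E]

section Aux

variable {F : Type*} [NormedAddCommGroup F] [NormedSpace ℂ F]

lemma isClosed_sup_fd (R K : Submodule ℂ F) (hR : IsClosed (R : Set F))
    (hK : FiniteDimensional ℂ K) : IsClosed ((R ⊔ K : Submodule ℂ F) : Set F) := by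
  haveI : IsClosed (R : Set F) := hR
  haveI := hK
  have hcont : Continuous R.mkQ := AddMonoidHomClass.continuous_of_bound R.mkQ 1 fun x => by
    simpa using Submodule.Quotient.norm_mk_le R x
  haveI : FiniteDimensional ℂ (K.map R.mkQ) := Module.Finite.map _ _
  have hclosed : IsClosed ((K.map R.mkQ : Submodule ℂ (F ⧸ R)) : Set (F ⧸ R)) :=
    Submodule.closed_of_finiteDimensional _
  have h2 : ((R ⊔ K : Submodule ℂ F) : Set F)
      = R.mkQ ⁻¹' ((K.map R.mkQ : Submodule ℂ (F ⧸ R)) : Set (F ⧸ R)) := by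
    rw [← Submodule.comap_map_mkQ]
    rfl
  rw [h2]
  exact hclosed.preimage hcont

lemma usf_of_boundedBelowOn [CompleteSpace F] (S : F →L[ℂ] F) (W : Submodule ℂ F)
    (hWc : IsClosed (W : Set F)) (hWf : FiniteDimensional ℂ (F ⧸ W))
    {c : ℝ} (hc : 0 < c) (hb : ∀ x ∈ W, c * ‖x‖ ≤ ‖S x‖) : UpperSemiFredholm S := by
  haveI : CompleteSpace W := hWc.completeSpace_coe
  haveI := hWf
  constructor
  · refine FiniteDimensional.of_injective (W.mkQ.comp (LinearMap.ker (S : F →ₗ[ℂ] F)).subtype) ?_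
    rw [← LinearMap.ker_eq_bot, LinearMap.ker_eq_bot']
    intro m hm
    have hmW : (m : F) ∈ W := by
      have h0 : W.mkQ (m : F) = 0 := hm
      simpa [Submodule.Quotient.mk_eq_zero] using h0
    have hS0 : S (m : F) = 0 := m.2
    have hle := hb (m : F) hmW
    rw [hS0, norm_zero] at hle
    have hnn : ‖(m : F)‖ = 0 := le_antisymm (by nlinarith [norm_nonneg (m : F)]) (norm_nonneg _)
    ext
    exact norm_eq_zero.mp hnn
  · obtain ⟨K, hK⟩ := Submodule.exists_isCompl W
    haveI : FiniteDimensional ℂ K := (W.quotientEquivOfIsCompl K hK).finiteDimensional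
    set G := S.comp W.subtypeL with hGdef
    have hanti : AntilipschitzWith c.toNNReal⁻¹ G := by
      apply ContinuousLinearMap.antilipschitz_of_bound
      intro x
      have hx := hb (x : F) x.2
      have hGx : G x = S (x : F) := rfl
      have hxn : ‖x‖ = ‖(x : F)‖ := rfl
      rw [NNReal.coe_inv, Real.coe_toNNReal c hc.le, hGx, hxn,
        inv_mul_eq_div, le_div_iff₀ hc, mul_comm]
      exact hx
    have hGrange : IsClosed (Set.range G) := hanti.isClosed_range G.uniformContinuous
    have hmapW : IsClosed ((W.map (S : F →ₗ[ℂ] F) : Submodule ℂ F) : Set F) := by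
      have h3 : ((W.map (S : F →ₗ[ℂ] F) : Submodule ℂ F) : Set F) = Set.range G := by
        ext y
        simp only [SetLike.mem_coe, Submodule.mem_map, Set.mem_range]
        constructor
        · rintro ⟨x, hx, rfl⟩
          exact ⟨⟨x, hx⟩, rfl⟩
        · rintro ⟨x, rfl⟩
          exact ⟨(x : F), x.2, rfl⟩
      rw [h3]
      exact hGrange
    have h4 : LinearMap.range (S : F →ₗ[ℂ] F) = W.map (S : F →ₗ[ℂ] F) ⊔ K.map (S : F →ₗ[ℂ] F) := by
      rw [LinearMap.range_eq_map, ← hK.sup_eq_top, Submodule.map_sup]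
    haveI : FiniteDimensional ℂ (K.map (S : F →ₗ[ℂ] F)) := Module.Finite.map _ _
    rw [h4]
    exact isClosed_sup_fd _ _ hmapW inferInstance

lemma usf_perturb [CompleteSpace F] {S : F →L[ℂ] F} (h : UpperSemiFredholm S) :
    ∃ ε > 0, ∀ D : F →L[ℂ] F, ‖D‖ < ε → UpperSemiFredholm (S + D) := by
  obtain ⟨hker, hcl⟩ := h
  haveI := hker
  have hcc : (LinearMap.ker (S : F →ₗ[ℂ] F)).ClosedComplemented :=
    Submodule.ClosedComplemented.of_finiteDimensional _
  obtain ⟨W, hWc, hWcompl⟩ := hcc.exists_isClosed_isCompl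
  haveI : CompleteSpace W := hWc.completeSpace_coe
  haveI : CompleteSpace (LinearMap.range (S : F →ₗ[ℂ] F)) := hcl.completeSpace_coe
  have hWf : FiniteDimensional ℂ (F ⧸ W) :=
    LinearEquiv.finiteDimensional (W.quotientEquivOfIsCompl (LinearMap.ker (S : F →ₗ[ℂ] F)) hWcompl.symm).symm
  set G := S.comp W.subtypeL with hGdef
  have hGapp : ∀ x : W, G x = S (x : F) := fun _ => rfl
  have hkerG : LinearMap.ker (G : W →ₗ[ℂ] F) = ⊥ := by
    rw [LinearMap.ker_eq_bot']
    intro m hm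
    have hmk : (m : F) ∈ LinearMap.ker (S : F →ₗ[ℂ] F) ⊓ W := ⟨hm, m.2⟩
    rw [hWcompl.inf_eq_bot] at hmk
    exact Subtype.ext hmk
  have hrangeG : LinearMap.range (G : W →ₗ[ℂ] F) = LinearMap.range (S : F →ₗ[ℂ] F) := by
    apply le_antisymm
    · rintro _ ⟨x, rfl⟩
      exact ⟨(x : F), rfl⟩
    · rintro _ ⟨x, rfl⟩
      have hx : x ∈ LinearMap.ker (S : F →ₗ[ℂ] F) ⊔ W := by rw [hWcompl.sup_eq_top]; trivial
      obtain ⟨k, hk, w, hw, rfl⟩ := Submodule.mem_sup.mp hx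
      refine ⟨⟨w, hw⟩, ?_⟩
      show S (w : F) = S (k + w)
      simp only [map_add]
      rw [show S k = 0 from hk]
      simp
  let G₂ : W →L[ℂ] (LinearMap.range (S : F →ₗ[ℂ] F)) :=
    G.codRestrict (LinearMap.range (S : F →ₗ[ℂ] F)) fun x => by
      rw [← hrangeG]; exact LinearMap.mem_range_self _ x
  have hkerG₂ : LinearMap.ker (G₂ : W →ₗ[ℂ] (LinearMap.range (S : F →ₗ[ℂ] F))) = ⊥ := by
    rw [ContinuousLinearMap.ker_codRestrict]
    exact hkerG
  have hrangeG₂ : LinearMap.range (G₂ : W →ₗ[ℂ] (LinearMap.range (S : F →ₗ[ℂ] F))) = ⊤ := by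
    apply Submodule.eq_top_iff'.mpr
    rintro ⟨y, hy⟩
    rw [← hrangeG] at hy
    obtain ⟨x, hx⟩ := hy
    exact ⟨x, Subtype.ext hx⟩
  let e := ContinuousLinearEquiv.ofBijective G₂ hkerG₂ hrangeG₂
  have hanti := e.antilipschitz
  set K1 : NNReal := ‖(e.symm : (LinearMap.range (S : F →ₗ[ℂ] F)) →L[ℂ] W)‖₊ with hK1
  set c : ℝ := ((K1 : ℝ) + 1)⁻¹ with hcdef
  have hc : 0 < c := by positivity
  have hbound : ∀ x ∈ W, c * ‖x‖ ≤ ‖S x‖ := by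
    intro x hx
    have h1 : ‖(⟨x, hx⟩ : W)‖ ≤ (K1 : ℝ) * ‖e ⟨x, hx⟩‖ := by
      have h2 := hanti.le_mul_dist (⟨x, hx⟩ : W) 0
      simpa [dist_eq_norm] using h2
    have h3 : ‖e (⟨x, hx⟩ : W)‖ = ‖S x‖ := by
      have : e (⟨x, hx⟩ : W) = G₂ (⟨x, hx⟩ : W) := rfl
      rw [this]
      rfl
    rw [h3] at h1
    have h4 : ‖(⟨x, hx⟩ : W)‖ = ‖x‖ := rfl
    rw [h4] at h1
    have h5 : ‖x‖ ≤ ((K1 : ℝ) + 1) * ‖S x‖ := by nlinarith [norm_nonneg (S x)]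
    rw [hcdef, inv_mul_eq_div, div_le_iff₀ (by positivity)]
    linarith [h5]
  refine ⟨c / 2, by positivity, fun D hD => ?_⟩
  refine usf_of_boundedBelowOn (S + D) W hWc hWf (half_pos hc) ?_
  intro x hx
  have h6 : ‖D x‖ ≤ c / 2 * ‖x‖ :=
    le_trans (D.le_opNorm x) (mul_le_mul_of_nonneg_right hD.le (norm_nonneg x))
  have h7 : ‖S x‖ ≤ ‖(S + D) x‖ + ‖D x‖ := by
    have h9 : S x = (S + D) x - D x := by
      simp [ContinuousLinearMap.add_apply]
    rw [h9]
    exact norm_sub_le _ _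
  have h8 := hbound x hx
  linarith

@[simp] lemma restr_apply_coe (T : F →L[ℂ] F) {M : Submodule ℂ F} (h : Inv T M) (x : M) :
    (restr T h x : F) = T x := rfl

lemma isUnit_clm_bijective {M : Type*} [NormedAddCommGroup M] [NormedSpace ℂ M]
    {S : M →L[ℂ] M} (h : IsUnit S) : Function.Bijective S := by
  obtain ⟨u, rfl⟩ := h
  have h1 : ∀ z, (↑u⁻¹ : M →L[ℂ] M) ((↑u : M →L[ℂ] M) z) = z := fun z => by
    have h2 : ((↑u⁻¹ * ↑u : M →L[ℂ] M)) z = (1 : M →L[ℂ] M) z := by rw [u.inv_mul]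
    exact h2
  constructor
  · intro x y hxy
    have hx := congrArg (↑u⁻¹ : M →L[ℂ] M) hxy
    rwa [h1, h1] at hx
  · intro y
    refine ⟨(↑u⁻¹ : M →L[ℂ] M) y, ?_⟩
    have h3 : ((↑u * ↑u⁻¹ : M →L[ℂ] M)) y = (1 : M →L[ℂ] M) y := by rw [u.mul_inv]
    exact h3

lemma usf_of_isUnit {S : F →L[ℂ] F} (h : IsUnit S) : UpperSemiFredholm S := by
  have hbij := isUnit_clm_bijective h
  constructor
  · have hker : LinearMap.ker (S : F →ₗ[ℂ] F) = ⊥ := LinearMap.ker_eq_bot.mpr hbij.1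
    rw [hker]
    infer_instance
  · have hr : (LinearMap.range (S : F →ₗ[ℂ] F) : Set F) = Set.univ := by
      rw [Set.eq_univ_iff_forall]
      intro y
      obtain ⟨x, hx⟩ := hbij.2 y
      exact ⟨x, hx⟩
    rw [hr]
    exact isClosed_univ

lemma quasinilpotent_of_subsingleton {M : Type*} [NormedAddCommGroup M] [NormedSpace ℂ M]
    [Subsingleton M] (S : M →L[ℂ] M) : QuasiNilpotentOp S :=
  spectrum.SpectralRadius.of_subsingleton S

lemma pseudo_of_usf {T : F →L[ℂ] F} (h : UpperSemiFredholm T) : PseudoUpperSemiBFredholm T := by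
  have hTop : Inv T (⊤ : Submodule ℂ F) := fun x _ => Submodule.mem_top
  have hBot : Inv T (⊥ : Submodule ℂ F) := fun x hx => by
    rw [Submodule.mem_bot] at hx ⊢
    rw [hx, map_zero]
  refine ⟨⊤, ⊥, hTop, hBot, ?_, ?_, isCompl_top_bot, ⟨?_, ?_⟩, ?_⟩
  · rw [Submodule.top_coe]; exact isClosed_univ
  · rw [Submodule.bot_coe]; exact isClosed_singleton
  · haveI := h.1
    refine FiniteDimensional.of_injective
      (LinearMap.codRestrict (LinearMap.ker (T : F →ₗ[ℂ] F))
        ((⊤ : Submodule ℂ F).subtype ∘ₗ (LinearMap.ker (restr T hTop : (⊤ : Submodule ℂ F) →ₗ[ℂ] (⊤ : Submodule ℂ F))).subtype) ?_) ?_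
    · intro x
      rw [LinearMap.mem_ker]
      have hx : restr T hTop x.1 = 0 := x.2
      exact congrArg Subtype.val hx
    · intro a b hab
      have h5 := congrArg Subtype.val hab
      exact Subtype.ext (Subtype.ext h5)
  · have hset : (LinearMap.range (restr T hTop : (⊤ : Submodule ℂ F) →ₗ[ℂ] (⊤ : Submodule ℂ F)) : Set (⊤ : Submodule ℂ F))
        = Subtype.val ⁻¹' (LinearMap.range (T : F →ₗ[ℂ] F) : Set F) := by
      ext y
      simp only [Set.mem_preimage, SetLike.mem_coe, LinearMap.mem_range]
      constructor
      · rintro ⟨x, rfl⟩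
        exact ⟨x.1, rfl⟩
      · rintro ⟨x, hx⟩
        exact ⟨⟨x, Submodule.mem_top⟩, Subtype.ext hx⟩
    rw [hset]
    exact h.2.preimage continuous_subtype_val
  · exact quasinilpotent_of_subsingleton _

lemma usf_of_compl [CompleteSpace F] (T : F →L[ℂ] F) (M N : Submodule ℂ F)
    (hMi : Inv T M) (hNi : Inv T N) (hMc : IsClosed (M : Set F)) (hNc : IsClosed (N : Set F))
    (hcompl : IsCompl M N) (h1 : UpperSemiFredholm (restr T hMi)) (h2 : IsUnit (restr T hNi)) :
    UpperSemiFredholm T := by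
  haveI := h1.1
  have hbij := isUnit_clm_bijective h2
  have key : ∀ x, T x = 0 → x ∈ M := by
    intro x hx
    have hxt : x ∈ M ⊔ N := by rw [hcompl.sup_eq_top]; exact Submodule.mem_top
    obtain ⟨m, hm, n, hn, rfl⟩ := Submodule.mem_sup.mp hxt
    have hTm : T m ∈ M := hMi m hm
    have hTn : T n ∈ N := hNi n hn
    have hsum : T m + T n = 0 := by rw [← map_add]; exact hx
    have hmem : T m ∈ M ⊓ N := ⟨hTm, by
      rw [eq_neg_of_add_eq_zero_left hsum]
      exact N.neg_mem hTn⟩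
    rw [hcompl.inf_eq_bot, Submodule.mem_bot] at hmem
    have hTn0 : T n = 0 := by
      have := hsum
      rw [hmem, zero_add] at this
      exact this
    have hn0 : n = 0 := by
      have h6 : restr T hNi ⟨n, hn⟩ = 0 := Subtype.ext (by simpa using hTn0)
      have h7 : restr T hNi ⟨n, hn⟩ = restr T hNi 0 := by rw [map_zero]; exact h6
      have h8 := hbij.1 h7
      simpa using congrArg Subtype.val h8
    rw [hn0, add_zero]
    exact hm
  constructor
  · refine FiniteDimensional.of_injective
      (LinearMap.codRestrict (LinearMap.ker (restr T hMi : M →ₗ[ℂ] M))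
        (LinearMap.codRestrict M (LinearMap.ker (T : F →ₗ[ℂ] F)).subtype (fun x => key x.1 x.2)) ?_) ?_
    · intro x
      rw [LinearMap.mem_ker]
      apply Subtype.ext
      exact x.2
    · intro a b hab
      exact Subtype.ext
        (congrArg (fun z : ↥(LinearMap.ker (restr T hMi : M →ₗ[ℂ] M)) => ((z : ↥M) : F)) hab)
  · set P : F →L[ℂ] F := M.subtypeL.comp (M.linearProjOfClosedCompl N hcompl hMc hNc) with hPdef
    have hPapply_left : ∀ m, (hm : m ∈ M) → P m = m := by
      intro m hm
      have h5 : M.linearProjOfIsCompl N hcompl m = ⟨m, hm⟩ :=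
        Submodule.linearProjOfIsCompl_apply_left hcompl ⟨m, hm⟩
      simp [hPdef, Submodule.coe_continuous_linearProjOfClosedCompl', h5, hm]
    have hPapply_right : ∀ n, (hn : n ∈ N) → P n = 0 := by
      intro n hn
      have h5 : M.linearProjOfIsCompl N hcompl n = 0 :=
        Submodule.linearProjOfIsCompl_apply_right hcompl ⟨n, hn⟩
      simp [hPdef, Submodule.coe_continuous_linearProjOfClosedCompl', h5, hn]
    have hPmemN : ∀ x, x - P x ∈ N := by
      intro x
      have h6 := Submodule.projection_add_projection_eq_self hcompl x
      have h7 : P x = ↑(M.linearProjOfIsCompl N hcompl x) := by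
        simp [hPdef, Submodule.coe_continuous_linearProjOfClosedCompl']
        rfl
      have h8 : x - P x = ↑(N.linearProjOfIsCompl M hcompl.symm x) := by
        rw [h7, eq_comm, eq_sub_iff_add_eq, add_comm]
        exact h6
      rw [h8]
      exact SetLike.coe_mem _
    set R : Set F := Subtype.val '' ((LinearMap.range (restr T hMi : M →ₗ[ℂ] M) : Submodule ℂ ↥M) : Set ↥M)
      with hRdef
    have hRclosed : IsClosed R := hMc.isClosedEmbedding_subtypeVal.isClosedMap _ h1.2
    have hset : (LinearMap.range (T : F →ₗ[ℂ] F) : Set F) = P ⁻¹' R := by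
      ext x
      simp only [Set.mem_preimage, SetLike.mem_coe, LinearMap.mem_range]
      constructor
      · rintro ⟨y, rfl⟩
        have hyt : y ∈ M ⊔ N := by rw [hcompl.sup_eq_top]; exact Submodule.mem_top
        obtain ⟨m, hm, n, hn, rfl⟩ := Submodule.mem_sup.mp hyt
        have hPT : P (T (m + n)) = T m := by
          rw [map_add, map_add, hPapply_left _ (hMi m hm), hPapply_right _ (hNi n hn), add_zero]
        change P (T (m + n)) ∈ R
        rw [hPT, hRdef]
        exact ⟨restr T hMi ⟨m, hm⟩, ⟨⟨m, hm⟩, rfl⟩, rfl⟩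
      · intro hx
        rw [hRdef] at hx
        obtain ⟨z, hz, hzval⟩ := hx
        obtain ⟨m, hm⟩ := hz
        obtain ⟨n, hn⟩ := hbij.2 ⟨x - P x, hPmemN x⟩
        refine ⟨(m : F) + (n : F), ?_⟩
        rw [map_add]
        have hTm : T (m : F) = P x := by
          have h9 : T (m : F) = (z : F) := congrArg Subtype.val hm
          rw [h9, hzval]
        have hTn : T (n : F) = x - P x := by
          have h9 := congrArg Subtype.val hn
          simpa using h9
        show T (m : F) + T (n : F) = x
        rw [hTm, hTn]
        abel
    have : IsClosed ((LinearMap.range (T : F →ₗ[ℂ] F) : Submodule ℂ F) : Set F) := by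
      rw [hset]
      exact hRclosed.preimage P.continuous
    exact this

lemma inv_shift {T : F →L[ℂ] F} {M : Submodule ℂ F} {a : ℂ} (h : Inv (T - a • 1) M) (b : ℂ) :
    Inv (T - b • 1) M := by
  intro x hx
  have h1 : (T - a • 1) x ∈ M := h x hx
  have h2 : (T - b • 1) x = (T - a • 1) x + (a - b) • x := by
    simp only [ContinuousLinearMap.sub_apply, ContinuousLinearMap.smul_apply,
      ContinuousLinearMap.one_apply, sub_smul]
    abel
  rw [h2]
  exact M.add_mem h1 (M.smul_mem _ hx)

lemma restr_shift (T : F →L[ℂ] F) {M : Submodule ℂ F} {a b : ℂ}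
    (ha : Inv (T - a • 1) M) (hb : Inv (T - b • 1) M) :
    restr (T - b • 1) hb = restr (T - a • 1) ha + (a - b) • 1 := by
  ext x
  have hrhs : (((restr (T - a • 1) ha + (a - b) • (1 : ↥M →L[ℂ] ↥M)) x : ↥M) : F)
      = (T - a • 1) (x : F) + (a - b) • (x : F) := by
    simp [ContinuousLinearMap.add_apply, ContinuousLinearMap.smul_apply,
      ContinuousLinearMap.one_apply]
  rw [hrhs]
  show (T - b • 1) (x : F) = _
  simp only [ContinuousLinearMap.sub_apply, ContinuousLinearMap.smul_apply,
    ContinuousLinearMap.one_apply, sub_smul]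
  abel

end Aux

set_option maxHeartbeats 1000000 in
set_option synthInstance.maxHeartbeats 1000000 in
theorem stmt1 [CompleteSpace E] (T : E →L[ℂ] E) : IsCompact (sigma_pBuF T) := by
  have hbdd : sigma_pBuF T ⊆ Metric.closedBall 0 ‖T‖ := by
    intro l hl
    by_contra hlb
    apply hl
    simp only [Metric.mem_closedBall, dist_zero_right, not_le] at hlb
    have hl0 : l ≠ 0 := by
      rintro rfl
      simp only [norm_zero] at hlb
      exact (norm_nonneg T).not_gt hlb
    apply pseudo_of_usf
    apply usf_of_isUnit
    have hsmall : ‖l⁻¹ • T‖ < 1 := by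
      have h1 : ‖l⁻¹ • T‖ ≤ ‖l⁻¹‖ * ‖T‖ := ContinuousLinearMap.opNorm_smul_le _ _
      have h2 : ‖l⁻¹‖ * ‖T‖ < 1 := by
        rw [norm_inv, inv_mul_eq_div, div_lt_one (norm_pos_iff.mpr hl0)]
        exact hlb
      linarith
    have hunit1 : IsUnit ((1 : E →L[ℂ] E) - l⁻¹ • T) := (Units.oneSub _ hsmall).isUnit
    have hfact : T - l • 1 = (-l) • ((1 : E →L[ℂ] E) - l⁻¹ • T) := by
      rw [smul_sub, smul_smul, neg_mul, mul_inv_cancel₀ hl0]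
      module
    rw [hfact]
    have hlunit : IsUnit ((-l) • (1 : E →L[ℂ] E)) := by
      rw [← Algebra.algebraMap_eq_smul_one]
      exact (isUnit_iff_ne_zero.mpr (neg_ne_zero.mpr hl0)).map (algebraMap ℂ (E →L[ℂ] E))
    have hmul : (-l) • ((1 : E →L[ℂ] E) - l⁻¹ • T)
        = ((-l) • (1 : E →L[ℂ] E)) * ((1 : E →L[ℂ] E) - l⁻¹ • T) := by
      rw [smul_mul_assoc, one_mul]
    rw [hmul]
    exact hlunit.mul hunit1
  have hclosed : IsClosed (sigma_pBuF T) := by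
    rw [← isOpen_compl_iff, Metric.isOpen_iff]
    intro l0 hl0
    simp only [Set.mem_compl_iff, sigma_pBuF, Set.mem_setOf_eq, not_not] at hl0
    obtain ⟨M, N, hM, hN, hMc, hNc, hcompl, hUSF, hQN⟩ := hl0
    haveI : CompleteSpace M := hMc.completeSpace_coe
    obtain ⟨ε, hε, hstab⟩ := usf_perturb hUSF
    refine ⟨ε, hε, ?_⟩
    intro l hld
    rw [Metric.mem_ball, dist_eq_norm] at hld
    simp only [Set.mem_compl_iff, sigma_pBuF, Set.mem_setOf_eq, not_not]
    by_cases hll0 : l = l0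
    · subst hll0
      exact ⟨M, N, hM, hN, hMc, hNc, hcompl, hUSF, hQN⟩
    · have hMl : Inv (T - l • 1) M := inv_shift hM l
      have hNl : Inv (T - l • 1) N := inv_shift hN l
      apply pseudo_of_usf
      apply usf_of_compl (T - l • 1) M N hMl hNl hMc hNc hcompl
      · rw [restr_shift T hM hMl]
        apply hstab
        have hnorm : ‖((l0 - l : ℂ)) • (1 : ↥M →L[ℂ] ↥M)‖ ≤ ‖l0 - l‖ := by
          have h0 : ‖((l0 - l : ℂ)) • (1 : ↥M →L[ℂ] ↥M)‖ ≤ ‖l0 - l‖ * ‖(1 : ↥M →L[ℂ] ↥M)‖ :=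
            ContinuousLinearMap.opNorm_smul_le _ _
          have h1 : ‖(1 : ↥M →L[ℂ] ↥M)‖ ≤ 1 := by
            rw [ContinuousLinearMap.one_def]
            exact ContinuousLinearMap.norm_id_le
          nlinarith [norm_nonneg (l0 - l)]
        calc ‖((l0 - l : ℂ)) • (1 : ↥M →L[ℂ] ↥M)‖ ≤ ‖l0 - l‖ := hnorm
        _ < ε := by rwa [norm_sub_rev]
      · rw [restr_shift T hN hNl]
        set Q := restr (T - l0 • 1) hN with hQ
        have hznz : (l - l0) ≠ 0 := sub_ne_zero_of_ne hll0
        have hns : (l - l0) ∉ spectrum ℂ Q := by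
          intro hmem
          have hle : (‖(l - l0)‖₊ : ENNReal) ≤ spectralRadius ℂ Q :=
            le_iSup₂ (f := fun k (_ : k ∈ spectrum ℂ Q) => (‖k‖₊ : ENNReal)) (l - l0) hmem
          rw [hQN] at hle
          simp only [nonpos_iff_eq_zero, ENNReal.coe_eq_zero, nnnorm_eq_zero] at hle
          exact hznz hle
        have hunit : IsUnit (algebraMap ℂ (↥N →L[ℂ] ↥N) (l - l0) - Q) :=
          spectrum.notMem_iff.mp hns
        rw [Algebra.algebraMap_eq_smul_one] at hunit
        have hneg := hunit.neg
        have heq : -((l - l0) • (1 : ↥N →L[ℂ] ↥N) - Q) = Q + (l0 - l) • 1 := by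
          module
        rw [heq] at hneg
        exact hneg
  exact Metric.isCompact_of_isClosed_isBounded hclosed
    (Metric.isBounded_closedBall.subset hbdd)

end PseudoBF
end
end

section
/- There exist a bounded operator T and a finite rank operator F on ℓ²(ℕ) ⊕ ℓ²(ℕ) with TF = FT such that σ_{ap}(T) ≠ σ_{ap}(T + F). Concretely, with T = A ⊕ I where A is the unilateral right shift, and F = 0 ⊕ F_ε where F_ε(x₁,x₂,…) = (−εx₁,0,0,…) for some 0 < ε < 1, one has σ_{ap}(T) = {λ : |λ| = 1} while σ_{ap}(T+F) = {λ : |λ| = 1} ∪ {1 − ε}. -/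
open Function Set

noncomputable section

namespace PseudoBF

variable {E : Type*} [NormedAddCommGroup E] [NormedSpace ℂ E]

abbrev H : Type := lp (fun _ : ℕ => ℂ) 2

lemma two_toReal : (2 : ENNReal).toReal = 2 := by simp

lemma summable_norm_sq (f : H) : Summable fun n => ‖f n‖ ^ 2 := by
  have := (lp.memℓp f).summable (by rw [two_toReal]; norm_num)
  rw [two_toReal] at this
  simpa [Real.rpow_two] using this

lemma norm_sq_eq (f : H) : ‖f‖ ^ 2 = ∑' n, ‖f n‖ ^ 2 := by
  have := lp.norm_rpow_eq_tsum (p := 2) (by rw [two_toReal]; norm_num) f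
  rw [two_toReal] at this
  simpa [Real.rpow_two] using this

lemma norm_eq_of_sq {a b : ℝ} (ha : 0 ≤ a) (hb : 0 ≤ b) (h : a ^ 2 = b ^ 2) : a = b := by
  have := congrArg Real.sqrt h
  rwa [Real.sqrt_sq ha, Real.sqrt_sq hb] at this

lemma memH_of_summable {f : ℕ → ℂ} (h : Summable fun n => ‖f n‖ ^ 2) :
    Memℓp f (2 : ENNReal) := by
  apply memℓp_gen
  rw [two_toReal]
  simpa [Real.rpow_two] using h

lemma le_of_sq_le {a b : ℝ} (ha : 0 ≤ a) (hb : 0 ≤ b) (h : a ^ 2 ≤ b ^ 2) : a ≤ b := by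
  nlinarith

lemma norm_le_of_pointwise {g h : H} {m : ℝ} (hm : 0 ≤ m)
    (hp : ∀ n, ‖g n‖ ≤ m * ‖h n‖) : ‖g‖ ≤ m * ‖h‖ := by
  refine le_of_sq_le (norm_nonneg _) (by positivity) ?_
  rw [norm_sq_eq, mul_pow, norm_sq_eq, ← tsum_mul_left]
  refine Summable.tsum_le_tsum (fun n => ?_) (summable_norm_sq g) ((summable_norm_sq h).mul_left _)
  calc ‖g n‖ ^ 2 ≤ (m * ‖h n‖) ^ 2 := by gcongr; exact hp n
  _ = m ^ 2 * ‖h n‖ ^ 2 := by ring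

lemma norm_ge_of_pointwise {g h : H} {m : ℝ} (hm : 0 ≤ m)
    (hp : ∀ n, m * ‖h n‖ ≤ ‖g n‖) : m * ‖h‖ ≤ ‖g‖ := by
  refine le_of_sq_le (by positivity) (norm_nonneg _) ?_
  rw [norm_sq_eq, mul_pow, norm_sq_eq, ← tsum_mul_left]
  refine Summable.tsum_le_tsum (fun n => ?_) ((summable_norm_sq h).mul_left _) (summable_norm_sq g)
  calc m ^ 2 * ‖h n‖ ^ 2 = (m * ‖h n‖) ^ 2 := by ring
  _ ≤ ‖g n‖ ^ 2 := by gcongr; exact hp n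

/-- The shift as a function on sequences. -/
def shiftFun (f : ℕ → ℂ) (n : ℕ) : ℂ := if n = 0 then 0 else f (n - 1)

lemma shift_summable {f : ℕ → ℂ} (h : Summable fun n => ‖f n‖ ^ 2) :
    Summable fun n => ‖shiftFun f n‖ ^ 2 := by
  rw [← summable_nat_add_iff 1]
  simpa [shiftFun] using h

lemma shift_tsum {f : ℕ → ℂ} (h : Summable fun n => ‖f n‖ ^ 2) :
    ∑' n, ‖shiftFun f n‖ ^ 2 = ∑' n, ‖f n‖ ^ 2 := by
  rw [Summable.tsum_eq_zero_add (shift_summable h)]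
  simp [shiftFun]

/-- The unilateral shift on `H`, as a linear map. -/
def shiftL : H →ₗ[ℂ] H where
  toFun := fun f => ⟨shiftFun f, memH_of_summable (shift_summable (summable_norm_sq f))⟩
  map_add' := by
    intro f g
    ext n
    show _ = shiftFun (⇑f) n + shiftFun (⇑g) n
    by_cases h : n = 0 <;> simp [h, shiftFun, lp.coeFn_add, Pi.add_apply]
  map_smul' := by
    intro c f
    ext n
    by_cases h : n = 0 <;> simp [h, shiftFun, lp.coeFn_smul]

lemma norm_shiftL (f : H) : ‖shiftL f‖ = ‖f‖ := by
  refine norm_eq_of_sq (norm_nonneg _) (norm_nonneg _) ?_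
  rw [norm_sq_eq, norm_sq_eq]
  exact shift_tsum (summable_norm_sq f)

/-- The unilateral shift on `H`. -/
def shiftA : H →L[ℂ] H :=
  LinearMap.mkContinuous shiftL 1 (fun f => by rw [norm_shiftL, one_mul])

@[simp] lemma shiftA_apply (f : H) (n : ℕ) :
    (shiftA f) n = if n = 0 then 0 else f (n - 1) := rfl

lemma norm_shiftA (f : H) : ‖shiftA f‖ = ‖f‖ := norm_shiftL f

/-- Diagonal operator with bounded entries. -/
def diagL (c : ℕ → ℂ) (C : ℝ) (hC : ∀ n, ‖c n‖ ≤ C) : H →L[ℂ] H :=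
  LinearMap.mkContinuous
    { toFun := fun f => ⟨fun n => c n * f n, memH_of_summable (by
        have hC0 : 0 ≤ C := le_trans (norm_nonneg _) (hC 0)
        refine Summable.of_nonneg_of_le (fun n => by positivity)
          (fun n => ?_) ((summable_norm_sq f).mul_left (C ^ 2))
        rw [norm_mul, mul_pow]
        gcongr
        exact hC n)⟩
      map_add' := by intro f g; ext n; show _ = c n * f n + c n * g n; simp [lp.coeFn_add, mul_add, Pi.add_apply]
      map_smul' := by intro a f; ext n; simp [lp.coeFn_smul]; ring }
    C (fun f => by
      have hC0 : 0 ≤ C := le_trans (norm_nonneg _) (hC 0)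
      exact norm_le_of_pointwise hC0 (fun n => by
        simpa [norm_mul] using mul_le_mul_of_nonneg_right (hC n) (norm_nonneg (f n))))

@[simp] lemma diagL_apply (c : ℕ → ℂ) (C : ℝ) (hC : ∀ n, ‖c n‖ ≤ C) (f : H) (n : ℕ) :
    (diagL c C hC f) n = c n * f n := rfl


lemma not_bb_of_eigen {T : E →L[ℂ] E} {x : E} (hx : x ≠ 0) (h : T x = 0) :
    ¬ BoundedBelow T := by
  rintro ⟨c, hc, hb⟩
  have := hb x
  rw [h, norm_zero] at this
  have hxn : 0 < ‖x‖ := norm_pos_iff.2 hx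
  nlinarith

lemma bb_prod_iff {E F : Type*} [NormedAddCommGroup E] [NormedSpace ℂ E]
    [NormedAddCommGroup F] [NormedSpace ℂ F]
    {S : E × F →L[ℂ] E × F} {S1 : E →L[ℂ] E} {S2 : F →L[ℂ] F}
    (h : ∀ x : E × F, S x = (S1 x.1, S2 x.2)) :
    BoundedBelow S ↔ BoundedBelow S1 ∧ BoundedBelow S2 := by
  constructor
  · rintro ⟨c, hc, hb⟩
    constructor
    · refine ⟨c, hc, fun x => ?_⟩
      have := hb (x, 0)
      rw [h (x, 0)] at this
      simpa [Prod.norm_def, norm_nonneg, le_max_iff] using this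
    · refine ⟨c, hc, fun x => ?_⟩
      have := hb (0, x)
      rw [h (0, x)] at this
      simpa [Prod.norm_def, norm_nonneg, le_max_iff] using this
  · rintro ⟨⟨c1, hc1, hb1⟩, ⟨c2, hc2, hb2⟩⟩
    refine ⟨min c1 c2, lt_min hc1 hc2, fun x => ?_⟩
    rw [h x, Prod.norm_def, Prod.norm_def]
    have k1 : min c1 c2 * ‖x.1‖ ≤ ‖S1 x.1‖ :=
      (mul_le_mul_of_nonneg_right (min_le_left _ _) (norm_nonneg _)).trans (hb1 x.1)
    have k2 : min c1 c2 * ‖x.2‖ ≤ ‖S2 x.2‖ :=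
      (mul_le_mul_of_nonneg_right (min_le_right _ _) (norm_nonneg _)).trans (hb2 x.2)
    rw [mul_max_of_nonneg _ _ (le_of_lt (lt_min hc1 hc2))]
    exact max_le (k1.trans (le_max_left _ _)) (k2.trans (le_max_right _ _))


lemma bb_shift_sub {l : ℂ} (hl : ‖l‖ ≠ 1) : BoundedBelow (shiftA - l • 1) := by
  refine ⟨|1 - ‖l‖|, abs_pos.2 (sub_ne_zero.2 fun h => hl h.symm), fun x => ?_⟩
  have h1 : (shiftA - l • 1) x = shiftA x - l • x := by
    simp [ContinuousLinearMap.sub_apply]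
  rw [h1]
  have h2 := abs_norm_sub_norm_le (shiftA x) (l • x)
  rw [norm_shiftA, norm_smul] at h2
  have : |1 - ‖l‖| * ‖x‖ = |‖x‖ - ‖l‖ * ‖x‖| := by
    rw [show ‖x‖ - ‖l‖ * ‖x‖ = (1 - ‖l‖) * ‖x‖ by ring, abs_mul, abs_of_nonneg (norm_nonneg x)]
  rw [this]
  exact h2

lemma not_bb_shift_sub {l : ℂ} (hl : ‖l‖ = 1) : ¬ BoundedBelow (shiftA - l • 1) := by
  rintro ⟨c, hc, hb⟩
  set μ : ℂ := (starRingEnd ℂ) l with hμ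
  have hlμ : l * μ = 1 := by
    rw [hμ, Complex.mul_conj, Complex.normSq_eq_norm_sq, hl]
    norm_num
  have hμn : ‖μ‖ = 1 := by rw [hμ, RCLike.norm_conj, hl]
  set N : ℕ := max 1 (⌈2 / c ^ 2⌉₊ + 1) with hN
  have hN1 : 1 ≤ N := le_max_left _ _
  have hNgt : 2 / c ^ 2 < (N : ℝ) := by
    have h1 : 2 / c ^ 2 ≤ (⌈2 / c ^ 2⌉₊ : ℝ) := Nat.le_ceil _
    have h2 : ((⌈2 / c ^ 2⌉₊ + 1 : ℕ) : ℝ) ≤ (N : ℝ) := by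
      exact_mod_cast Nat.cast_le.2 (le_max_right _ _)
    push_cast at h2
    linarith
  -- the approximate eigenvector
  set xf : ℕ → ℂ := fun k => if k < N then μ ^ (k + 1) else 0 with hxf
  have hxfmem : Memℓp xf (2 : ENNReal) := by
    apply memH_of_summable
    apply summable_of_ne_finset_zero (s := Finset.range N)
    intro k hk
    simp only [Finset.mem_range, not_lt] at hk
    simp only [hxf]
    rw [if_neg (not_lt.2 hk)]
    simp
  set x : H := ⟨xf, hxfmem⟩ with hx
  have hxcoe : ∀ k, x k = if k < N then μ ^ (k + 1) else 0 := fun k => rfl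
  have hxnorm : ‖x‖ ^ 2 = (N : ℝ) := by
    rw [norm_sq_eq]
    rw [tsum_eq_sum (s := Finset.range N) (fun k hk => by
      simp only [Finset.mem_range, not_lt] at hk
      rw [hxcoe, if_neg (not_lt.2 hk)]
      simp)]
    have : ∀ k ∈ Finset.range N, ‖x k‖ ^ 2 = 1 := by
      intro k hk
      simp only [Finset.mem_range] at hk
      rw [hxcoe, if_pos hk, norm_pow, hμn, one_pow, one_pow]
    rw [Finset.sum_congr rfl this]
    simp
  set y : H := (shiftA - l • 1) x with hy
  have hycoe : ∀ k, y k = if k = 0 then -1 else if k = N then μ ^ N else 0 := by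
    intro k
    have hyk : y k = shiftFun xf k - l * xf k := by
      rw [hy]
      have h1 : (shiftA - l • 1) x = shiftA x - l • x := by
        simp [ContinuousLinearMap.sub_apply]
      rw [h1]
      have h2 : ((shiftA x - l • x : H) : ℕ → ℂ) k = (shiftA x) k - (l • x : H) k := by
        rw [lp.coeFn_sub, Pi.sub_apply]
      rw [h2, lp.coeFn_smul, Pi.smul_apply, smul_eq_mul]
      rfl
    rw [hyk]
    by_cases hk : k = 0
    · subst hk
      have h0N : 0 < N := by omega
      simp [shiftFun, hxf, h0N, hlμ]
    · rw [if_neg hk]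
      simp only [shiftFun, if_neg hk, hxf]
      by_cases hkN : k < N
      · rw [if_neg (by omega : ¬ k = N), if_pos (by omega : k - 1 < N), if_pos hkN]
        have hk1 : k - 1 + 1 = k := by omega
        rw [hk1]
        have : l * μ ^ (k + 1) = μ ^ k := by
          rw [pow_succ']
          rw [← mul_assoc, hlμ, one_mul]
        rw [this, sub_self]
      · by_cases hkN' : k = N
        · rw [if_pos hkN', if_pos (by omega : k - 1 < N), if_neg (by omega : ¬ k < N),
            (by omega : k - 1 + 1 = k), hkN', mul_zero, sub_zero]
        · rw [if_neg hkN', if_neg (by omega : ¬ k - 1 < N), if_neg hkN]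
          simp
  have hynorm : ‖y‖ ^ 2 = 2 := by
    rw [norm_sq_eq]
    rw [tsum_eq_sum (s := {0, N}) (fun k hk => by
      simp only [Finset.mem_insert, Finset.mem_singleton, not_or] at hk
      rw [hycoe, if_neg hk.1, if_neg hk.2]
      simp)]
    rw [Finset.sum_pair (by omega : (0:ℕ) ≠ N)]
    rw [hycoe, hycoe, if_pos rfl, if_neg (by omega : ¬ N = 0), if_pos rfl]
    rw [norm_neg, norm_one, norm_pow, hμn]
    norm_num
  have hbx := hb x
  rw [← hy] at hbx
  have hsq : (c * ‖x‖) ^ 2 ≤ ‖y‖ ^ 2 := by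
    have h0 : 0 ≤ c * ‖x‖ := by positivity
    nlinarith [norm_nonneg y]
  rw [mul_pow, hxnorm, hynorm] at hsq
  have : 2 < c ^ 2 * (N : ℝ) := by
    rw [div_lt_iff₀ (by positivity : (0:ℝ) < c ^ 2)] at hNgt
    linarith [hNgt]
  linarith


lemma bb_diag_pointwise {S : H →L[ℂ] H} {c : ℕ → ℂ} {m : ℝ} (hm : 0 < m)
    (hc : ∀ n, m ≤ ‖c n‖) (hS : ∀ (x : H) (n : ℕ), (S x) n = c n * x n) :
    BoundedBelow S :=
  ⟨m, hm, fun x => norm_ge_of_pointwise hm.le (fun n => by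
    rw [hS, norm_mul]
    exact mul_le_mul_of_nonneg_right (hc n) (norm_nonneg _))⟩

lemma coord_add (f g : H) (n : ℕ) : (↑(f + g) : ℕ → ℂ) n = f n + g n := by
  rw [lp.coeFn_add, Pi.add_apply]

lemma coord_smul (c : ℂ) (f : H) (n : ℕ) : (↑(c • f) : ℕ → ℂ) n = c * f n := by
  rw [lp.coeFn_smul, Pi.smul_apply, smul_eq_mul]

lemma coord_sub (f g : H) (n : ℕ) : (↑(f - g) : ℕ → ℂ) n = f n - g n := by
  rw [lp.coeFn_sub, Pi.sub_apply]

lemma single_ne_zero (i : ℕ) : (lp.single 2 i (1 : ℂ) : H) ≠ 0 := by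
  intro h
  have h1 : (lp.single 2 i (1 : ℂ) : H) i = (0 : H) i := by rw [h]
  rw [lp.single_apply_self, lp.coeFn_zero] at h1
  exact one_ne_zero h1

lemma single_add_arg (i : ℕ) (a b : ℂ) :
    (lp.single 2 i (a + b) : H) = lp.single 2 i a + lp.single 2 i b := by
  ext j
  rw [coord_add]
  by_cases h : j = i
  · subst h
    rw [lp.single_apply_self, lp.single_apply_self, lp.single_apply_self]
  · rw [lp.single_apply_ne _ _ _ h, lp.single_apply_ne _ _ _ h, lp.single_apply_ne _ _ _ h,
      add_zero]

lemma norm_single_H (a : ℂ) (i : ℕ) : ‖(lp.single 2 i a : H)‖ = ‖a‖ := by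
  have := lp.norm_single (E := fun _ : ℕ => ℂ) (p := 2) (by norm_num)
    i a
  exact this

/-- The rank-one perturbation on `H`, as a linear map. -/
def FepsLin (ε : ℝ) : H →ₗ[ℂ] H where
  toFun := fun x => lp.single 2 0 (-(ε : ℂ) * x 0)
  map_add' := by
    intro f g
    dsimp only
    rw [coord_add, mul_add, single_add_arg]
  map_smul' := by
    intro c f
    dsimp only
    rw [RingHom.id_apply, coord_smul,
      show -(ε : ℂ) * (c * f 0) = c • (-(ε : ℂ) * f 0) by rw [smul_eq_mul]; ring,
      lp.single_smul]

/-- The rank-one perturbation on `H`. -/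
def FepsL (ε : ℝ) : H →L[ℂ] H :=
  LinearMap.mkContinuous (FepsLin ε)
    |ε| (fun x => by
      have h1 : ‖FepsLin ε x‖ = ‖-(ε : ℂ) * x 0‖ := norm_single_H _ 0
      rw [h1, norm_mul, norm_neg, Complex.norm_real, Real.norm_eq_abs]
      exact mul_le_mul_of_nonneg_left (lp.norm_apply_le_norm (by norm_num) x 0) (abs_nonneg _))

@[simp] lemma FepsL_apply (ε : ℝ) (x : H) :
    FepsL ε x = lp.single 2 0 (-(ε : ℂ) * x 0) := rfl

lemma FepsL_coord (ε : ℝ) (x : H) (n : ℕ) :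
    (FepsL ε x) n = if n = 0 then -(ε : ℂ) * x 0 else 0 := by
  by_cases h : n = 0
  · subst h
    rw [if_pos rfl, FepsL_apply, lp.single_apply_self]
  · rw [if_neg h, FepsL_apply, lp.single_apply_ne _ _ _ h]


/-- The operator `T = A ⊕ I`. -/
def Top : (H × H) →L[ℂ] (H × H) := shiftA.prodMap 1

/-- The operator `F = 0 ⊕ F_ε`. -/
def Fop (ε : ℝ) : (H × H) →L[ℂ] (H × H) := (0 : H →L[ℂ] H).prodMap (FepsL ε)

lemma Top_apply (x : H × H) : Top x = (shiftA x.1, x.2) := rfl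

lemma Fop_apply (ε : ℝ) (x : H × H) : Fop ε x = (0, FepsL ε x.2) := by
  show ((0 : H →L[ℂ] H) x.1, FepsL ε x.2) = (0, FepsL ε x.2)
  rw [ContinuousLinearMap.zero_apply]

lemma bb_smul_id {l : ℂ} (hl : l ≠ 1) :
    BoundedBelow (((1 : ℂ) - l) • (1 : H →L[ℂ] H)) := by
  refine bb_diag_pointwise (c := fun _ => 1 - l)
    (norm_pos_iff.2 (sub_ne_zero.2 fun h => hl h.symm)) (fun n => le_refl _) ?_
  intro x n
  rw [ContinuousLinearMap.smul_apply, ContinuousLinearMap.one_apply, coord_smul]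

lemma hpt_T (l : ℂ) (x : H × H) :
    (Top - l • 1) x = ((shiftA - l • 1) x.1, (((1 : ℂ) - l) • (1 : H →L[ℂ] H)) x.2) := by
  have h1 : (Top - l • 1) x = Top x - l • x := by
    simp [ContinuousLinearMap.sub_apply]
  rw [h1, Top_apply]
  have h2 : (shiftA - l • 1) x.1 = shiftA x.1 - l • x.1 := by
    simp [ContinuousLinearMap.sub_apply]
  have h3 : (((1 : ℂ) - l) • (1 : H →L[ℂ] H)) x.2 = x.2 - l • x.2 := by
    rw [ContinuousLinearMap.smul_apply, ContinuousLinearMap.one_apply, sub_smul, one_smul]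
  rw [h2, h3]
  rfl

lemma sigma_ap_Top : sigma_ap Top = {l : ℂ | ‖l‖ = 1} := by
  ext l
  simp only [sigma_ap, mem_setOf_eq]
  rw [bb_prod_iff (hpt_T l)]
  constructor
  · intro h
    by_contra hl
    refine h ⟨bb_shift_sub hl, bb_smul_id fun h1 => ?_⟩
    subst h1
    simp at hl
  · intro hl h
    exact not_bb_shift_sub hl h.1


/-- Diagonal entries of `I + F_ε`. -/
def dFun (ε : ℝ) (n : ℕ) : ℂ := if n = 0 then ((1 - ε : ℝ) : ℂ) else 1

lemma dFun_le (ε : ℝ) : ∀ n, ‖dFun ε n‖ ≤ max 1 |1 - ε| := by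
  intro n
  by_cases h : n = 0
  · rw [dFun, if_pos h, Complex.norm_real, Real.norm_eq_abs]
    exact le_max_right _ _
  · rw [dFun, if_neg h, norm_one]
    exact le_max_left _ _

/-- The operator `I + F_ε` as a diagonal operator. -/
def Dop (ε : ℝ) : H →L[ℂ] H := diagL (dFun ε) _ (dFun_le ε)

lemma Dop_coord (ε : ℝ) (x : H) (n : ℕ) : (Dop ε x) n = dFun ε n * x n := rfl

lemma hS2_coord (ε : ℝ) (l : ℂ) (x : H) (n : ℕ) :
    ((Dop ε - l • 1) x) n = (dFun ε n - l) * x n := by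
  have h1 : (Dop ε - l • 1) x = Dop ε x - l • x := by
    simp [ContinuousLinearMap.sub_apply]
  rw [h1, coord_sub, Dop_coord, coord_smul, sub_mul]

lemma hpt_TF (ε : ℝ) (l : ℂ) (x : H × H) :
    ((Top + Fop ε) - l • 1) x = ((shiftA - l • 1) x.1, (Dop ε - l • 1) x.2) := by
  have h1 : ((Top + Fop ε) - l • 1) x = Top x + Fop ε x - l • x := by
    simp [ContinuousLinearMap.sub_apply, ContinuousLinearMap.add_apply]
  rw [h1, Top_apply, Fop_apply]
  have h2 : (shiftA - l • 1) x.1 = shiftA x.1 - l • x.1 := by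
    simp [ContinuousLinearMap.sub_apply]
  have hD : x.2 + FepsL ε x.2 = Dop ε x.2 := by
    ext n
    rw [coord_add, FepsL_coord, Dop_coord, dFun]
    by_cases h : n = 0
    · subst h
      rw [if_pos rfl, if_pos rfl]
      push_cast
      ring
    · rw [if_neg h, if_neg h, add_zero, one_mul]
  have h3 : (Dop ε - l • 1) x.2 = Dop ε x.2 - l • x.2 := by
    simp [ContinuousLinearMap.sub_apply]
  rw [h2, h3, ← hD]
  show (_ + _, x.2 + FepsL ε x.2) - l • x = _
  rw [Prod.smul_def]
  ext : 1
  · show shiftA x.1 + 0 - l • x.1 = shiftA x.1 - l • x.1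
    rw [add_zero]
  · rfl

lemma bb_S2 {ε : ℝ} {l : ℂ} (h1 : l ≠ ((1 - ε : ℝ) : ℂ)) (h2 : l ≠ 1) :
    BoundedBelow (Dop ε - l • 1) := by
  set m := min ‖((1 - ε : ℝ) : ℂ) - l‖ ‖(1 : ℂ) - l‖ with hm
  have hmpos : 0 < m := by
    apply lt_min
    · exact norm_pos_iff.2 (sub_ne_zero.2 fun h => h1 h.symm)
    · exact norm_pos_iff.2 (sub_ne_zero.2 fun h => h2 h.symm)
  refine bb_diag_pointwise (c := fun n => dFun ε n - l) hmpos (fun n => ?_)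
    (fun x n => hS2_coord ε l x n)
  by_cases h : n = 0
  · simp only [dFun]
    rw [if_pos h]
    exact min_le_left _ _
  · simp only [dFun]
    rw [if_neg h]
    exact min_le_right _ _

lemma not_bb_S2_eps {ε : ℝ} : ¬ BoundedBelow (Dop ε - ((1 - ε : ℝ) : ℂ) • 1) := by
  refine not_bb_of_eigen (single_ne_zero 0) ?_
  ext n
  rw [hS2_coord, lp.coeFn_zero, Pi.zero_apply]
  by_cases h : n = 0
  · subst h
    rw [dFun, if_pos rfl, sub_self, zero_mul]
  · rw [lp.single_apply_ne _ _ _ h, mul_zero]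

lemma sigma_ap_TF {ε : ℝ} (hε0 : 0 < ε) (hε1 : ε < 1) :
    sigma_ap (Top + Fop ε) = {l : ℂ | ‖l‖ = 1} ∪ {((1 - ε : ℝ) : ℂ)} := by
  ext l
  simp only [sigma_ap, mem_setOf_eq, mem_union, mem_singleton_iff]
  rw [bb_prod_iff (hpt_TF ε l)]
  constructor
  · intro h
    by_contra hl
    push_neg at hl
    refine h ⟨bb_shift_sub hl.1, bb_S2 hl.2 fun hl1 => ?_⟩
    rw [hl1] at hl
    simp at hl
  · rintro (hl | hl)
    · exact fun h => not_bb_shift_sub hl h.1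
    · intro h
      rw [hl] at h
      exact not_bb_S2_eps h.2

theorem stmt10 (ε : ℝ) (hε0 : 0 < ε) (hε1 : ε < 1) :
    ∃ T F : (H × H) →L[ℂ] (H × H),
      (∀ x : H × H, ∀ n : ℕ, (T x).1 n = if n = 0 then 0 else x.1 (n - 1)) ∧
      (∀ x : H × H, (T x).2 = x.2) ∧
      (∀ x : H × H, (F x).1 = 0) ∧
      (∀ x : H × H, ∀ n : ℕ, (F x).2 n = if n = 0 then -(ε : ℂ) * x.2 0 else 0) ∧
      FiniteDimensional ℂ (LinearMap.range (F : (H × H) →ₗ[ℂ] (H × H))) ∧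
      Commute T F ∧
      sigma_ap T = {l : ℂ | ‖l‖ = 1} ∧
      sigma_ap (T + F) = {l : ℂ | ‖l‖ = 1} ∪ {((1 - ε : ℝ) : ℂ)} ∧
      sigma_ap T ≠ sigma_ap (T + F) := by
  refine ⟨Top, Fop ε, fun x n => rfl, fun x => rfl, fun x => by rw [Fop_apply],
    fun x n => by rw [Fop_apply]; exact FepsL_coord ε x.2 n, ?_, ?_, sigma_ap_Top,
    sigma_ap_TF hε0 hε1, ?_⟩
  · -- finite rank
    have hle : LinearMap.range (Fop ε : (H × H) →ₗ[ℂ] (H × H)) ≤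
        Submodule.span ℂ {(((0 : H), (lp.single 2 0 (1 : ℂ) : H)) : H × H)} := by
      rintro y ⟨x, rfl⟩
      have hx : Fop ε x = (-(ε : ℂ) * x.2 0) • (((0 : H), (lp.single 2 0 (1 : ℂ) : H)) : H × H) := by
        rw [Fop_apply, Prod.smul_def, smul_zero]
        simp only [Prod.mk.injEq]
        refine ⟨trivial, ?_⟩
        rw [FepsL_apply, ← lp.single_smul, smul_eq_mul, mul_one]
      rw [ContinuousLinearMap.coe_coe, hx]
      exact Submodule.smul_mem _ _ (Submodule.mem_span_singleton_self _)
    exact Submodule.finiteDimensional_of_le hle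
  · -- commute
    refine ContinuousLinearMap.ext fun x => ?_
    show Top (Fop ε x) = Fop ε (Top x)
    rw [Fop_apply, Top_apply, Fop_apply, Top_apply]
    simp only [map_zero]
  · -- the spectra differ
    rw [sigma_ap_Top, sigma_ap_TF hε0 hε1]
    intro h
    have hmem : ((1 - ε : ℝ) : ℂ) ∈ {l : ℂ | ‖l‖ = 1} ∪ {((1 - ε : ℝ) : ℂ)} :=
      mem_union_right _ rfl
    rw [← h, mem_setOf_eq, Complex.norm_real, Real.norm_eq_abs,
      abs_of_pos (by linarith)] at hmem
    linarith

end PseudoBF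
end
end

section
/- Every quasi-nilpotent bounded operator Q on a complex Banach space has empty pseudo upper semi B-Fredholm spectrum, empty pseudo lower semi B-Fredholm spectrum, and empty pseudo B-Fredholm spectrum. -/
open Function Set

noncomputable section

namespace PseudoBF

variable {E : Type*} [NormedAddCommGroup E] [NormedSpace ℂ E]

-- auxiliary lemmas
section Aux
open scoped ENNReal

lemma inv_top (T : E →L[ℂ] E) : Inv T ⊤ := fun _ _ => trivial

lemma inv_bot (T : E →L[ℂ] E) : Inv T ⊥ := by
  intro x hx
  simp only [Submodule.mem_bot] at hx ⊢
  simp [hx]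

lemma restr_apply (T : E →L[ℂ] E) {M : Submodule ℂ E} (h : Inv T M) (x : M) :
    (restr T h x : E) = T x := rfl

lemma qn_of_subsingleton {M : Submodule ℂ E} [Subsingleton M] (S : M →L[ℂ] M) :
    QuasiNilpotentOp S := by
  have h : spectrum ℂ S = ∅ := by
    have hs : Subsingleton (M →L[ℂ] M) :=
      ⟨fun f g => ContinuousLinearMap.ext fun x => Subsingleton.elim (f x) (g x)⟩
    rw [spectrum, spectrum.resolventSet_of_subsingleton, Set.compl_univ]
  unfold QuasiNilpotentOp spectralRadius
  simp [h]

lemma spectrum_subset_singleton_zero {T : E →L[ℂ] E} (hT : QuasiNilpotentOp T) :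
    spectrum ℂ T ⊆ {0} := by
  intro k hk
  by_contra hk0
  have h1 : (0 : ℝ≥0∞) < (‖k‖₊ : ℝ≥0∞) := by
    rw [pos_iff_ne_zero]
    intro h
    exact hk0 (by simpa using nnnorm_eq_zero.mp (by exact_mod_cast h))
  have hres := spectrum.mem_resolventSet_of_spectralRadius_lt (a := T) (k := k) (hT ▸ h1)
  exact (spectrum.notMem_iff.mpr (spectrum.mem_resolventSet_iff.mp hres)) hk

lemma isUnit_restr_top {T : E →L[ℂ] E} (hT : IsUnit T) :
    IsUnit (restr T (inv_top T)) := by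
  obtain ⟨u, rfl⟩ := hT
  refine isUnit_iff_exists.mpr ⟨restr (↑u⁻¹) (inv_top _), ?_, ?_⟩
  · ext x
    show ((↑u * ↑u⁻¹ : E →L[ℂ] E)) (x : E) = (x : E)
    rw [u.mul_inv]; rfl
  · ext x
    show ((↑u⁻¹ * ↑u : E →L[ℂ] E)) (x : E) = (x : E)
    rw [u.inv_mul]; rfl

lemma algebraMap_sub_restr_top (T : E →L[ℂ] E) (k : ℂ) :
    algebraMap ℂ ((⊤ : Submodule ℂ E) →L[ℂ] (⊤ : Submodule ℂ E)) k - restr T (inv_top T)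
      = restr (algebraMap ℂ (E →L[ℂ] E) k - T) (inv_top _) := by
  ext x
  simp only [ContinuousLinearMap.sub_apply, Submodule.coe_sub, restr_apply,
    Algebra.algebraMap_eq_smul_one, ContinuousLinearMap.smul_apply,
    ContinuousLinearMap.one_apply, Submodule.coe_smul, SetLike.val_smul]

lemma qn_restr_top {T : E →L[ℂ] E} (hT : QuasiNilpotentOp T) :
    QuasiNilpotentOp (restr T (inv_top T)) := by
  have hsub : spectrum ℂ (restr T (inv_top T)) ⊆ {0} := by
    intro k hk
    by_contra hk0
    have hkT : k ∉ spectrum ℂ T := fun h => hk0 (spectrum_subset_singleton_zero hT h)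
    have hu : IsUnit (algebraMap ℂ (E →L[ℂ] E) k - T) := spectrum.notMem_iff.mp hkT
    have : IsUnit (algebraMap ℂ _ k - restr T (inv_top T)) := by
      rw [algebraMap_sub_restr_top]
      exact isUnit_restr_top hu
    exact spectrum.notMem_iff.mpr this hk
  unfold QuasiNilpotentOp spectralRadius
  refine le_antisymm (iSup₂_le fun k hk => ?_) zero_le
  have hk0 : k = 0 := hsub hk
  simp [hk0]

lemma isUnit_sub_smul_one {T : E →L[ℂ] E} (hT : QuasiNilpotentOp T) {l : ℂ} (hl : l ≠ 0) :
    IsUnit (T - l • (1 : E →L[ℂ] E)) := by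
  have hl' : l ∉ spectrum ℂ T := fun h => hl (spectrum_subset_singleton_zero hT h)
  have hu : IsUnit (algebraMap ℂ (E →L[ℂ] E) l - T) := spectrum.notMem_iff.mp hl'
  have : T - l • (1 : E →L[ℂ] E) = -(algebraMap ℂ (E →L[ℂ] E) l - T) := by
    rw [Algebra.algebraMap_eq_smul_one]; abel
  rw [this]
  exact hu.neg

lemma fredholm_of_isUnit {F : Type*} [NormedAddCommGroup F] [NormedSpace ℂ F]
    {S : F →L[ℂ] F} (h : IsUnit S) : UpperSemiFredholm S ∧ LowerSemiFredholm S := by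
  obtain ⟨u, rfl⟩ := h
  have hinvmul : ∀ a, (↑u⁻¹ : F →L[ℂ] F) ((↑u : F →L[ℂ] F) a) = a := by
    intro a
    rw [← ContinuousLinearMap.mul_apply, u.inv_mul]
    rfl
  have hmulinv : ∀ a, (↑u : F →L[ℂ] F) ((↑u⁻¹ : F →L[ℂ] F) a) = a := by
    intro a
    rw [← ContinuousLinearMap.mul_apply, u.mul_inv]
    rfl
  have hinj : Injective (↑u : F →L[ℂ] F) := fun a b hab => by
    rw [← hinvmul a, hab, hinvmul]
  have hsurj : Surjective (↑u : F →L[ℂ] F) := fun b => ⟨(↑u⁻¹ : F →L[ℂ] F) b, hmulinv b⟩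
  have hker : LinearMap.ker ((↑u : F →L[ℂ] F) : F →ₗ[ℂ] F) = ⊥ := (LinearMap.ker_eq_bot (f := ((↑u : F →L[ℂ] F) : F →ₗ[ℂ] F))).mpr hinj
  have hrange : LinearMap.range ((↑u : F →L[ℂ] F) : F →ₗ[ℂ] F) = ⊤ := (LinearMap.range_eq_top (f := ((↑u : F →L[ℂ] F) : F →ₗ[ℂ] F))).mpr hsurj
  refine ⟨⟨?_, ?_⟩, ?_⟩
  · rw [hker]; infer_instance
  · rw [hrange]
    exact isClosed_univ
  · unfold LowerSemiFredholm
    rw [hrange]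
    have : Subsingleton (F ⧸ (⊤ : Submodule ℂ F)) :=
      Submodule.Quotient.subsingleton_iff.mpr rfl
    infer_instance

lemma fredholm_of_subsingleton {F : Type*} [NormedAddCommGroup F] [NormedSpace ℂ F]
    [Subsingleton F] (S : F →L[ℂ] F) : UpperSemiFredholm S ∧ LowerSemiFredholm S := by
  have hsurj : Surjective S := fun b => ⟨0, Subsingleton.elim _ _⟩
  have hrange : LinearMap.range (S : F →ₗ[ℂ] F) = ⊤ := (LinearMap.range_eq_top (f := (S : F →ₗ[ℂ] F))).mpr hsurj
  refine ⟨⟨?_, ?_⟩, ?_⟩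
  · have : Subsingleton (LinearMap.ker (S : F →ₗ[ℂ] F)) := inferInstance
    infer_instance
  · rw [hrange]
    exact isClosed_univ
  · unfold LowerSemiFredholm
    rw [hrange]
    have : Subsingleton (F ⧸ (⊤ : Submodule ℂ F)) :=
      Submodule.Quotient.subsingleton_iff.mpr rfl
    infer_instance

lemma decomp_mono {T : E →L[ℂ] E} {P P' : ∀ M : Submodule ℂ E, (M →L[ℂ] M) → Prop}
    (h : ∀ M S, P M S → P' M S) : Decomp T P → Decomp T P' := by
  rintro ⟨M, N, hM, hN, h1, h2, h3, h4, h5⟩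
  exact ⟨M, N, hM, hN, h1, h2, h3, h M _ h4, h5⟩

lemma key_decomp [CompleteSpace E] (Q : E →L[ℂ] E) (hQ : QuasiNilpotentOp Q) (l : ℂ) :
    Decomp (Q - l • 1) (fun _ S => UpperSemiFredholm S ∧ LowerSemiFredholm S) := by
  by_cases hl : l = 0
  · subst hl
    have hT : Q - (0 : ℂ) • 1 = Q := by simp
    refine ⟨⊥, ⊤, inv_bot _, inv_top _, ?_, ?_, isCompl_bot_top, ?_, ?_⟩
    · rw [Submodule.bot_coe]
      exact isClosed_singleton
    · rw [Submodule.top_coe]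
      exact isClosed_univ
    · exact fredholm_of_subsingleton _
    · have : QuasiNilpotentOp (Q - (0 : ℂ) • 1) := by rw [hT]; exact hQ
      exact qn_restr_top this
  · have hu : IsUnit (Q - l • (1 : E →L[ℂ] E)) := isUnit_sub_smul_one hQ hl
    refine ⟨⊤, ⊥, inv_top _, inv_bot _, ?_, ?_, isCompl_top_bot, ?_, qn_of_subsingleton _⟩
    · rw [Submodule.top_coe]
      exact isClosed_univ
    · rw [Submodule.bot_coe]
      exact isClosed_singleton
    · exact fredholm_of_isUnit (isUnit_restr_top hu)

end Aux

theorem stmt18 [CompleteSpace E] (Q : E →L[ℂ] E) (hQ : QuasiNilpotentOp Q) :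
    sigma_pBuF Q = ∅ ∧ sigma_pBlF Q = ∅ ∧ sigma_pBF Q = ∅ := by
  have key := key_decomp Q hQ
  refine ⟨?_, ?_, ?_⟩ <;> rw [Set.eq_empty_iff_forall_notMem] <;> intro l hl <;> apply hl
  · exact decomp_mono (fun M S h => h.1) (key l)
  · exact decomp_mono (fun M S h => h.2) (key l)
  · exact key l

end PseudoBF
end
end

section
/- Let T₀ on ℓ²(ℕ) be defined by T₀(x₁,x₂,…) = (x₁,0,x₂,0,x₃,0,…) and T₂ on ℓ²(ℕ) by T₂(x₁,x₂,…) = (x₂/2, x₃/3, …). Then T₀ is injective with closed range of infinite codimension (hence upper semi-Fredholm but not lower semi-Fredholm), T₂ is quasi-nilpotent, and T = T₀ ⊕ T₂ is pseudo upper semi B-Fredholm. -/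
open Function Set
open scoped NNReal ENNReal

noncomputable section

namespace PseudoBF

variable {E : Type*} [NormedAddCommGroup E] [NormedSpace ℂ E]

open Filter in
private lemma qn_of_bound {A : Type*} [NormedRing A] [NormedAlgebra ℂ A] [CompleteSpace A]
    (a : A) (h1 : ‖(1:A)‖ ≤ 1) (h : ∀ k : ℕ, ‖a ^ k‖ ≤ 1 / (k.factorial : ℝ)) :
    spectralRadius ℂ a = 0 := by
  have key : ∀ ε : ℝ≥0, 0 < ε → spectralRadius ℂ a ≤ ε := by
    intro ε hε
    have htd := FloorSemiring.tendsto_pow_div_factorial_atTop ((ε : ℝ)⁻¹)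
    have h2 := htd.eventually (gt_mem_nhds (by norm_num : (0:ℝ) < 1))
    obtain ⟨n, hn1, hn2⟩ := (h2.and (eventually_ge_atTop 1)).exists
    obtain ⟨m, rfl⟩ : ∃ m, n = m + 1 := ⟨n - 1, by omega⟩
    have hfac : (0:ℝ) < ((m+1).factorial : ℝ) := by positivity
    have hb : ‖a ^ (m+1)‖ ≤ (ε:ℝ) ^ (m+1) := by
      refine (h (m+1)).trans ?_
      rw [div_lt_one hfac] at hn1
      rw [div_le_iff₀ hfac]
      have hεpos : (0:ℝ) < (ε:ℝ) := hε
      calc (1:ℝ) = (ε:ℝ)^(m+1) * ((ε:ℝ)⁻¹)^(m+1) := by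
            rw [← mul_pow, mul_inv_cancel₀ hεpos.ne', one_pow]
        _ ≤ (ε:ℝ)^(m+1) * ((m+1).factorial : ℝ) :=
            mul_le_mul_of_nonneg_left hn1.le (by positivity)
    have hbn : (‖a ^ (m+1)‖₊ : ℝ≥0∞) ≤ ((ε ^ (m+1) : ℝ≥0) : ℝ≥0∞) := by
      rw [ENNReal.coe_le_coe, ← NNReal.coe_le_coe, coe_nnnorm, NNReal.coe_pow]
      exact hb
    calc spectralRadius ℂ a
        ≤ (‖a ^ (m + 1)‖₊ : ℝ≥0∞) ^ (1 / (m + 1) : ℝ) * (‖(1 : A)‖₊ : ℝ≥0∞) ^ (1 / (m + 1) : ℝ) :=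
          spectrum.spectralRadius_le_pow_nnnorm_pow_one_div ℂ a m
      _ ≤ ((ε ^ (m+1) : ℝ≥0) : ℝ≥0∞) ^ (1 / (m + 1) : ℝ) * 1 := by
          refine mul_le_mul' (ENNReal.rpow_le_rpow hbn (by positivity)) ?_
          refine ENNReal.rpow_le_one ?_ (by positivity)
          rw [← ENNReal.coe_one, ENNReal.coe_le_coe, ← NNReal.coe_le_coe, coe_nnnorm]
          exact h1.trans (by norm_num)
      _ = (ε : ℝ≥0∞) := by
          rw [mul_one, ENNReal.coe_pow, ← ENNReal.rpow_natCast (ε : ℝ≥0∞) (m+1),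
            ← ENNReal.rpow_mul]
          norm_num
          rw [mul_inv_cancel₀ (by positivity : ((m:ℝ)+1) ≠ 0), ENNReal.rpow_one]
  refine le_antisymm ?_ (zero_le)
  refine ENNReal.le_of_forall_nnreal_lt fun p hp => ?_
  rcases eq_or_lt_of_le (zero_le : (0:ℝ≥0) ≤ p) with h0 | h0
  · simp [← h0]
  · exact absurd (key p h0) hp.not_ge

private lemma hp2 : 0 < (2:ℝ≥0∞).toReal := by norm_num

private lemma T0_lower (T0 : H →L[ℂ] H)
    (hT0 : ∀ (x : H) (n : ℕ), T0 x n = if n % 2 = 0 then x (n / 2) else 0) (x : H) :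
    ‖x‖ ≤ ‖T0 x‖ := by
  refine lp.norm_le_of_tsum_le hp2 (norm_nonneg _) ?_
  rw [lp.norm_rpow_eq_tsum hp2]
  have hkey : ∀ k : ℕ, ‖x k‖ ^ (2:ℝ≥0∞).toReal = ‖T0 x (2*k)‖ ^ (2:ℝ≥0∞).toReal := by
    intro k
    rw [hT0]
    have h1 : (2*k) % 2 = 0 := by omega
    have h2 : (2*k) / 2 = k := by omega
    rw [h1, h2]
    simp
  calc ∑' k, ‖x k‖ ^ (2:ℝ≥0∞).toReal
      = ∑' k, ‖T0 x (2*k)‖ ^ (2:ℝ≥0∞).toReal := tsum_congr hkey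
    _ ≤ ∑' n, ‖T0 x n‖ ^ (2:ℝ≥0∞).toReal :=
        tsum_comp_le_tsum_of_inj ((lp.memℓp (T0 x)).summable hp2)
          (fun n => Real.rpow_nonneg (norm_nonneg _) _) (fun a b hab => by omega)

private lemma T2coord (T2 : H →L[ℂ] H)
    (hT2 : ∀ (x : H) (n : ℕ), T2 x n = x (n + 1) / ((n : ℂ) + 2)) :
    ∀ (k : ℕ) (x : H) (n : ℕ),
      ‖(T2 ^ k) x n‖ ≤ ‖x (n + k)‖ / ((k+1).factorial : ℝ) := by
  intro k
  induction k with
  | zero => intro x n; simp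
  | succ k ih =>
    intro x n
    have hps : (T2 ^ (k+1)) x = (T2 ^ k) (T2 x) := by
      rw [pow_succ, ContinuousLinearMap.mul_apply]
    rw [hps]
    refine (ih (T2 x) n).trans ?_
    rw [hT2]
    have hnorm : ‖x (n + k + 1) / ((↑(n+k) : ℂ) + 2)‖ = ‖x (n + k + 1)‖ / ((n:ℝ) + k + 2) := by
      rw [norm_div]
      congr 1
      have : ((↑(n+k) : ℂ) + 2) = ((n + k + 2 : ℕ) : ℂ) := by push_cast; ring
      rw [this, Complex.norm_natCast]
      push_cast; ring
    rw [hnorm, div_div]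
    have harg : n + k + 1 = n + (k + 1) := by omega
    rw [harg]
    apply div_le_div_of_nonneg_left (norm_nonneg _) (by positivity)
    have : ((k+2).factorial : ℝ) = (k+2) * ((k+1).factorial : ℝ) := by
      rw [show k+2 = (k+1)+1 from rfl, Nat.factorial_succ]; push_cast; ring
    rw [this]
    apply mul_le_mul_of_nonneg_right _ (by positivity)
    linarith [Nat.cast_nonneg (α := ℝ) n]

private lemma T2pow (T2 : H →L[ℂ] H)
    (hT2 : ∀ (x : H) (n : ℕ), T2 x n = x (n + 1) / ((n : ℂ) + 2)) (k : ℕ) (x : H) :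
    ‖(T2 ^ k) x‖ ≤ ‖x‖ / ((k+1).factorial : ℝ) := by
  set c : ℝ := ((k+1).factorial : ℝ) with hc
  have hcpos : 0 < c := by positivity
  refine lp.norm_le_of_tsum_le hp2 (by positivity) ?_
  have hS : Summable (fun n => ‖x n‖ ^ (2:ℝ≥0∞).toReal) := (lp.memℓp x).summable hp2
  have hS2 : Summable (fun n => ‖x (n + k)‖ ^ (2:ℝ≥0∞).toReal) := (summable_nat_add_iff k).2 hS
  have hS3 : Summable (fun n => (‖x (n + k)‖ / c) ^ (2:ℝ≥0∞).toReal) := by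
    have : ∀ n, ‖x (n + k)‖ ^ (2:ℝ≥0∞).toReal / c ^ (2:ℝ≥0∞).toReal
        = (‖x (n + k)‖ / c) ^ (2:ℝ≥0∞).toReal := by
      intro n; rw [Real.div_rpow (norm_nonneg _) hcpos.le]
    exact (hS2.div_const (c ^ (2:ℝ≥0∞).toReal)).congr this
  calc ∑' n, ‖(T2 ^ k) x n‖ ^ (2:ℝ≥0∞).toReal
      ≤ ∑' n, (‖x (n + k)‖ / c) ^ (2:ℝ≥0∞).toReal := by
        refine Summable.tsum_le_tsum (fun n => ?_) ((lp.memℓp _).summable hp2) hS3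
        exact Real.rpow_le_rpow (norm_nonneg _) (T2coord T2 hT2 k x n) (by norm_num)
    _ = (∑' n, ‖x (n + k)‖ ^ (2:ℝ≥0∞).toReal) / c ^ (2:ℝ≥0∞).toReal := by
        rw [← tsum_div_const]
        exact tsum_congr fun n => Real.div_rpow (norm_nonneg _) hcpos.le _
    _ ≤ (∑' n, ‖x n‖ ^ (2:ℝ≥0∞).toReal) / c ^ (2:ℝ≥0∞).toReal := by
        apply div_le_div_of_nonneg_right _ (by positivity)
        exact tsum_comp_le_tsum_of_inj hS (fun n => Real.rpow_nonneg (norm_nonneg _) _)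
          (fun a b hab => by omega)
    _ = (‖x‖ / c) ^ (2:ℝ≥0∞).toReal := by
        rw [← lp.norm_rpow_eq_tsum hp2, Real.div_rpow (norm_nonneg _) hcpos.le _]

private lemma closedRange_of_lower {E F : Type*} [NormedAddCommGroup E] [NormedSpace ℂ E]
    [NormedAddCommGroup F] [NormedSpace ℂ F] [CompleteSpace E]
    (T : E →L[ℂ] F) (h : ∀ x, ‖x‖ ≤ ‖T x‖) : IsClosed (LinearMap.range (T : E →ₗ[ℂ] F) : Set F) := by
  have ha : AntilipschitzWith 1 T := T.antilipschitz_of_bound (by simpa using h)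
  simpa [LinearMap.coe_range] using ha.isClosed_range T.uniformContinuous


set_option maxHeartbeats 2000000 in
set_option synthInstance.maxHeartbeats 200000 in
theorem stmt19 (T0 T2 : H →L[ℂ] H)
    (hT0 : ∀ (x : H) (n : ℕ), T0 x n = if n % 2 = 0 then x (n / 2) else 0)
    (hT2 : ∀ (x : H) (n : ℕ), T2 x n = x (n + 1) / ((n : ℂ) + 2)) :
    Injective ⇑T0 ∧ IsClosed (LinearMap.range (T0 : H →ₗ[ℂ] H) : Set H) ∧
      ¬ FiniteDimensional ℂ (H ⧸ LinearMap.range (T0 : H →ₗ[ℂ] H)) ∧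
      UpperSemiFredholm T0 ∧ ¬ LowerSemiFredholm T0 ∧
      QuasiNilpotentOp T2 ∧ PseudoUpperSemiBFredholm (T0.prodMap T2) := by
  have hlow := T0_lower T0 hT0
  have hinj : Injective ⇑T0 := by
    intro x y hxy
    have h0 : T0 (x - y) = 0 := by rw [T0.map_sub, hxy, sub_self]
    have := hlow (x - y)
    rw [h0, norm_zero] at this
    have hxy0 : ‖x - y‖ = 0 := le_antisymm this (norm_nonneg _)
    rwa [norm_sub_eq_zero_iff] at hxy0
  have hclosed : IsClosed (LinearMap.range (T0 : H →ₗ[ℂ] H) : Set H) := closedRange_of_lower T0 hlow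
  have hquot : ¬ FiniteDimensional ℂ (H ⧸ LinearMap.range (T0 : H →ₗ[ℂ] H)) := by
    intro hFD
    set f : ℕ → H ⧸ LinearMap.range (T0 : H →ₗ[ℂ] H) :=
      fun i => (LinearMap.range (T0 : H →ₗ[ℂ] H)).mkQ (lp.single 2 (2*i+1) (1:ℂ)) with hf
    have hLI : LinearIndependent ℂ f := by
      rw [linearIndependent_iff']
      intro s g hsum i hi
      have hmem : (∑ j ∈ s, g j • lp.single 2 (2*j+1) (1:ℂ)) ∈ LinearMap.range (T0 : H →ₗ[ℂ] H) := by
        rw [← Submodule.Quotient.mk_eq_zero]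
        have : Submodule.Quotient.mk (p := LinearMap.range (T0 : H →ₗ[ℂ] H))
            (∑ j ∈ s, g j • lp.single 2 (2*j+1) (1:ℂ)) = ∑ j ∈ s, g j • f j := by
          simp only [hf, ← Submodule.mkQ_apply, map_sum, map_smul]
        rw [this, hsum]
      obtain ⟨y, hy⟩ := hmem
      have heval : ((∑ j ∈ s, g j • lp.single 2 (2*j+1) (1:ℂ) : H) : ∀ n, ℂ) (2*i+1) = g i := by
        rw [lp.coeFn_sum, Finset.sum_apply]
        rw [Finset.sum_eq_single i]
        · rw [lp.coeFn_smul, Pi.smul_apply, lp.single_apply_self, smul_eq_mul, mul_one]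
        · intro j hj hji
          rw [lp.coeFn_smul, Pi.smul_apply, lp.single_apply_ne 2 _ _ (by omega : 2*i+1 ≠ 2*j+1),
            smul_zero]
        · exact fun h => absurd hi h
      have hzero : (T0 y) (2*i+1) = 0 := by
        rw [hT0, if_neg (by omega)]
      rw [← hy] at heval
      rw [← heval]
      exact hzero
    exact Module.Finite.not_linearIndependent_of_infinite f hLI
  have husf : UpperSemiFredholm T0 := by
    constructor
    · have : LinearMap.ker (T0 : H →ₗ[ℂ] H) = ⊥ := LinearMap.ker_eq_bot.mpr hinj
      rw [this]; infer_instance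
    · exact hclosed
  have hT2bound : ∀ k : ℕ, ∀ x : H, ‖(T2 ^ k) x‖ ≤ ‖x‖ / ((k+1).factorial : ℝ) := T2pow T2 hT2
  have hfacmono : ∀ k : ℕ, (k.factorial : ℝ) ≤ ((k+1).factorial : ℝ) := by
    intro k; exact_mod_cast Nat.factorial_le (by omega)
  have hT2op : ∀ k : ℕ, ‖T2 ^ k‖ ≤ 1 / (k.factorial : ℝ) := by
    intro k
    refine ContinuousLinearMap.opNorm_le_bound _ (by positivity) fun x => ?_
    refine (hT2bound k x).trans ?_
    rw [one_div, inv_mul_eq_div]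
    apply div_le_div_of_nonneg_left (norm_nonneg _) (by positivity) (hfacmono k)
  have hqn : QuasiNilpotentOp T2 :=
    qn_of_bound T2 (by rw [ContinuousLinearMap.one_def]; exact ContinuousLinearMap.norm_id_le) hT2op
  refine ⟨hinj, hclosed, hquot, husf, hquot, hqn, ?_⟩
  -- the direct sum part
  set T : H × H →L[ℂ] H × H := T0.prodMap T2 with hT
  have hTapp : ∀ p : H × H, T p = (T0 p.1, T2 p.2) := fun p => rfl
  have hmemM : ∀ p : H × H, p ∈ Submodule.fst ℂ H H ↔ p.2 = 0 := by
    intro p; simp [Submodule.fst]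
  have hmemN : ∀ p : H × H, p ∈ Submodule.snd ℂ H H ↔ p.1 = 0 := by
    intro p; simp [Submodule.snd]
  have hM : Inv T (Submodule.fst ℂ H H) := by
    intro p hp
    rw [hmemM] at hp ⊢
    rw [hTapp, hp, map_zero]
  have hN : Inv T (Submodule.snd ℂ H H) := by
    intro p hp
    rw [hmemN] at hp ⊢
    rw [hTapp, hp, map_zero]
  have hMclosed : IsClosed ((Submodule.fst ℂ H H : Set (H × H))) := by
    have : (Submodule.fst ℂ H H : Set (H × H)) = (fun p : H × H => p.2) ⁻¹' {0} := by
      ext p; simpa using hmemM p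
    rw [this]; exact isClosed_singleton.preimage continuous_snd
  have hNclosed : IsClosed ((Submodule.snd ℂ H H : Set (H × H))) := by
    have : (Submodule.snd ℂ H H : Set (H × H)) = (fun p : H × H => p.1) ⁻¹' {0} := by
      ext p; simpa using hmemN p
    rw [this]; exact isClosed_singleton.preimage continuous_fst
  refine ⟨Submodule.fst ℂ H H, Submodule.snd ℂ H H, hM, hN, hMclosed, hNclosed,
    isCompl_iff.mpr ⟨disjoint_iff.mpr (Submodule.fst_inf_snd ..),
      codisjoint_iff.mpr (Submodule.fst_sup_snd ..)⟩, ?_, ?_⟩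
  · -- restriction to fst is upper semi-Fredholm
    set S := restr T hM with hS
    have hSlow : ∀ u : Submodule.fst ℂ H H, ‖u‖ ≤ ‖S u‖ := by
      intro u
      have hu2 : (u : H × H).2 = 0 := (hmemM _).1 u.2
      have h1 : ‖S u‖ = ‖T (u : H × H)‖ := rfl
      have h2 : ‖u‖ = max ‖(u : H × H).1‖ ‖(u : H × H).2‖ := rfl
      rw [h1, hTapp, hu2, map_zero]
      have h3 : ‖((T0 (u : H × H).1, (0:H)) : H × H)‖ = max ‖T0 (u : H × H).1‖ ‖(0:H)‖ :=
        Prod.norm_def _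
      rw [h3, norm_zero]
      calc ‖u‖ = max ‖(u : H × H).1‖ ‖(u : H × H).2‖ := h2
        _ = ‖(u : H × H).1‖ := by rw [hu2, norm_zero]; exact max_eq_left (norm_nonneg _)
        _ ≤ ‖T0 (u : H × H).1‖ := hlow _
        _ ≤ max ‖T0 (u : H × H).1‖ 0 := le_max_left _ _
    haveI : CompleteSpace (Submodule.fst ℂ H H) := hMclosed.completeSpace_coe
    constructor
    · have hSinj : Injective ⇑S := by
        intro u v huv
        have h0 : S (u - v) = 0 := by rw [S.map_sub, huv, sub_self]
        have := hSlow (u - v)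
        rw [h0, norm_zero] at this
        have : ‖u - v‖ = 0 := le_antisymm this (norm_nonneg _)
        rwa [norm_sub_eq_zero_iff] at this
      have : LinearMap.ker (S : Submodule.fst ℂ H H →ₗ[ℂ] Submodule.fst ℂ H H) = ⊥ := LinearMap.ker_eq_bot.mpr hSinj
      rw [this]; infer_instance
    · exact closedRange_of_lower S hSlow
  · -- restriction to snd is quasi-nilpotent
    set S := restr T hN with hS
    haveI : CompleteSpace (Submodule.snd ℂ H H) := hNclosed.completeSpace_coe
    have hpowcoe : ∀ (k : ℕ) (u : Submodule.snd ℂ H H),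
        ((S ^ k) u : H × H) = ((T0 ^ k) (u : H × H).1, (T2 ^ k) (u : H × H).2) := by
      intro k
      induction k with
      | zero => intro u; simp [ContinuousLinearMap.one_apply]
      | succ k ih =>
        intro u
        rw [pow_succ, ContinuousLinearMap.mul_apply]
        rw [ih (S u)]
        have h1 : ((S u : Submodule.snd ℂ H H) : H × H) = T (u : H × H) := rfl
        rw [h1, hTapp]
        simp only [pow_succ, ContinuousLinearMap.mul_apply]
    have hSop : ∀ k : ℕ, ‖S ^ k‖ ≤ 1 / (k.factorial : ℝ) := by
      intro k
      refine ContinuousLinearMap.opNorm_le_bound _ (by positivity) fun u => ?_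
      have hu1 : (u : H × H).1 = 0 := (hmemN _).1 u.2
      have h1 : ‖(S ^ k) u‖ = ‖((S ^ k) u : H × H)‖ := rfl
      rw [h1, hpowcoe, hu1, map_zero, Prod.norm_def]
      simp only [norm_zero]
      have h2 : ‖u‖ = ‖(u : H × H).2‖ := by
        have : ‖u‖ = max ‖(u : H × H).1‖ ‖(u : H × H).2‖ := rfl
        rw [this, hu1, norm_zero]; exact max_eq_right (norm_nonneg _)
      rw [max_eq_right (norm_nonneg _), h2]
      calc ‖(T2 ^ k) (u : H × H).2‖ ≤ ‖(u : H × H).2‖ / ((k+1).factorial : ℝ) := hT2bound k _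
        _ ≤ ‖(u : H × H).2‖ / (k.factorial : ℝ) := by
            apply div_le_div_of_nonneg_left (norm_nonneg _) (by positivity) (hfacmono k)
        _ = 1 / (k.factorial : ℝ) * ‖(u : H × H).2‖ := by ring
    exact qn_of_bound S
      (by rw [ContinuousLinearMap.one_def]; exact ContinuousLinearMap.norm_id_le) hSop


end PseudoBF
end
end
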